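/- arXiv:1812.00272 — 8 statements merged into one kernel-verified Lean document; each statement's English description precedes it below -/
import Mathlib

section
/- Let X and Y be real Hilbert spaces, u† ∈ X, y = F(u†), and y^δ ∈ Y with ‖y^δ − y‖ ≤ δ. Let u ∈ B_ρ(u†), suppose F is Fréchet differentiable at u with derivative F'(u) ∈ B(X,Y), ‖F'(u)‖ ≤ L_F, and suppose the tangential cone condition ‖F(u) − F(u†) − F'(u)(u − u†)‖ ≤ ν‖F(u) − F(u†)‖ holds with ν > 0. Assume ‖F(u) − y^δ‖ ≥ τδ for some τ > 0, and set C_τ = 1 − L_F² − ν − (1+ν)/τ. Then −‖F(u) − y^δ‖² + ⟨F(u) − y^δ, F(u) − y − F'(u)(u − u†)⟩ + δ‖F(u) − y^δ‖ + ‖F'(u)*(F(u) − y^δ)‖² ≤ −C_τ‖F(u) − y^δ‖², where F'(u)* denotes the Hilbert-space adjoint of F'(u). -/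
open scoped RealInnerProductSpace

/-- Estimate of the term `T_F` in the monotonicity proof: under the tangential cone condition,
the bound `‖F'(u)‖ ≤ L_F`, the noise bound `‖yδ − y‖ ≤ δ` (with `y = F(u†)`) and the
discrepancy condition `‖F(u) − yδ‖ ≥ τδ`, one has
`−‖F(u) − yδ‖² + ⟨F(u) − yδ, F(u) − y − F'(u)(u − u†)⟩ + δ‖F(u) − yδ‖ + ‖F'(u)*(F(u) − yδ)‖²
  ≤ −C_τ‖F(u) − yδ‖²` where `C_τ = 1 − L_F² − ν − (1+ν)/τ`. -/
theorem stmt1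
    {X Y : Type*}
    [NormedAddCommGroup X] [InnerProductSpace ℝ X] [CompleteSpace X]
    [NormedAddCommGroup Y] [InnerProductSpace ℝ Y] [CompleteSpace Y]
    (F : X → Y) (udag : X) (y yδ : Y) (δ ρ LF ν τ Cτ : ℝ)
    (hy : y = F udag) (hρ : 0 < ρ) (hν : 0 < ν) (hτ : 0 < τ)
    (hnoise : ‖yδ - y‖ ≤ δ)
    (u : X) (hu : u ∈ Metric.closedBall udag ρ)
    (F' : X →L[ℝ] Y) (hdiff : HasFDerivAt F F' u)
    (hLF : ‖F'‖ ≤ LF)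
    (htcc : ‖F u - F udag - F' (u - udag)‖ ≤ ν * ‖F u - F udag‖)
    (hdisc : τ * δ ≤ ‖F u - yδ‖)
    (hCτ : Cτ = 1 - LF ^ 2 - ν - (1 + ν) / τ) :
    -‖F u - yδ‖ ^ 2 + ⟪F u - yδ, F u - y - F' (u - udag)⟫
        + δ * ‖F u - yδ‖ + ‖ContinuousLinearMap.adjoint F' (F u - yδ)‖ ^ 2
      ≤ -Cτ * ‖F u - yδ‖ ^ 2 := by
  set r := F u - yδ with hr
  have hR : (0:ℝ) ≤ ‖r‖ := norm_nonneg _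
  have hδ : (0:ℝ) ≤ δ := le_trans (norm_nonneg _) hnoise
  have hLF0 : (0:ℝ) ≤ LF := le_trans (norm_nonneg _) hLF
  have hFF : ‖F u - F udag‖ ≤ ‖r‖ + δ := by
    have e : F u - F udag = r + (yδ - y) := by rw [hr, hy]; abel
    calc ‖F u - F udag‖ = ‖r + (yδ - y)‖ := by rw [e]
    _ ≤ ‖r‖ + ‖yδ - y‖ := norm_add_le _ _
    _ ≤ ‖r‖ + δ := by linarith
  have hinner : ⟪r, F u - y - F' (u - udag)⟫ ≤ ‖r‖ * (ν * (‖r‖ + δ)) := by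
    calc ⟪r, F u - y - F' (u - udag)⟫ ≤ ‖r‖ * ‖F u - y - F' (u - udag)‖ :=
          real_inner_le_norm _ _
    _ ≤ ‖r‖ * (ν * ‖F u - F udag‖) := by
          apply mul_le_mul_of_nonneg_left _ hR
          rw [hy]; exact htcc
    _ ≤ ‖r‖ * (ν * (‖r‖ + δ)) := by
          apply mul_le_mul_of_nonneg_left _ hR
          exact mul_le_mul_of_nonneg_left hFF hν.le
  have hadj : ‖ContinuousLinearMap.adjoint F' r‖ ≤ LF * ‖r‖ := by
    calc ‖ContinuousLinearMap.adjoint F' r‖ ≤ ‖ContinuousLinearMap.adjoint F'‖ * ‖r‖ :=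
          (ContinuousLinearMap.adjoint F').le_opNorm r
    _ = ‖F'‖ * ‖r‖ := by rw [LinearIsometryEquiv.norm_map (ContinuousLinearMap.adjoint (𝕜 := ℝ)) F']
    _ ≤ LF * ‖r‖ := mul_le_mul_of_nonneg_right hLF hR
  have hadj2 : ‖ContinuousLinearMap.adjoint F' r‖ ^ 2 ≤ LF ^ 2 * ‖r‖ ^ 2 := by
    nlinarith [norm_nonneg (ContinuousLinearMap.adjoint F' r)]
  have hδR : δ * τ ≤ ‖r‖ := by linarith [hdisc]
  have hdiv : (1 + ν) / τ * ‖r‖ ^ 2 ≥ (1 + ν) * (δ * ‖r‖) := by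
    rw [ge_iff_le, div_mul_eq_mul_div, le_div_iff₀ hτ]
    have h1 : (1 + ν) * (δ * τ * ‖r‖) ≤ (1 + ν) * (‖r‖ * ‖r‖) :=
      mul_le_mul_of_nonneg_left (mul_le_mul_of_nonneg_right hδR hR) (by linarith)
    nlinarith [h1]
  rw [hCτ]
  nlinarith
end

section
/- Let X and Y be real Hilbert spaces, u† ∈ X, y = F(u†), y^δ ∈ Y with ‖y^δ − y‖ ≤ δ. Suppose u_k ∈ B_ρ(u†), F and Â are Fréchet differentiable at u_k with ‖F'(u_k)‖ ≤ L_F, ‖Â'(u_k)‖ ≤ L_Â, the tangential cone condition ‖F(u_k) − F(u†) − F'(u_k)(u_k − u†)‖ ≤ ν‖F(u_k) − F(u†)‖ holds, ‖Â(u_k) − y^δ‖ ≤ C_Â^δ, ‖F(u_k) − y^δ‖ ≥ τδ with C_τ = 1 − L_F² − ν − (1+ν)/τ ≥ 0, and λ_k ≥ 0 satisfies λ_k·L_Â·C_Â^δ ≤ ρ and λ_k ≤ C_λ^δ·‖F(u_k) − y^δ‖². Define u_{k+1} = u_k − F'(u_k)*(F(u_k) − y^δ) − λ_k·Â'(u_k)*(Â(u_k)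 − y^δ). Then ‖u_{k+1} − u†‖² − ‖u_k − u†‖² ≤ −2(C_τ − 2·L_Â·C_Â^δ·C_λ^δ·ρ)·‖F(u_k) − y^δ‖². -/
open scoped RealInnerProductSpace

set_option maxHeartbeats 1000000 in
/-- One-step descent inequality (Proposition 2.3, main estimate): under the tangential cone
condition, the derivative bounds, the discrepancy condition and the conditions on `λ_k`, the
iteratively regularized Landweber step
`u_{k+1} = u_k − F'(u_k)*(F(u_k) − yδ) − λ_k·Â'(u_k)*(Â(u_k) − yδ)` satisfies
`‖u_{k+1} − u†‖² − ‖u_k − u†‖² ≤ −2(C_τ − 2·L_Â·C_Â^δ·C_λ^δ·ρ)·‖F(u_k) − yδ‖²`. -/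
theorem stmt3
    {X Y : Type*}
    [NormedAddCommGroup X] [InnerProductSpace ℝ X] [CompleteSpace X]
    [NormedAddCommGroup Y] [InnerProductSpace ℝ Y] [CompleteSpace Y]
    (F A : X → Y) (udag : X) (y yδ : Y) (δ ρ LF LA ν τ Cτ CA Clam lam : ℝ)
    (hy : y = F udag) (hρ : 0 < ρ) (hν : 0 < ν) (hτ : 0 < τ)
    (hCA : 0 < CA) (hClam : 0 < Clam) (hlam : 0 ≤ lam)
    (hnoise : ‖yδ - y‖ ≤ δ)
    (uk : X) (huk : uk ∈ Metric.closedBall udag ρ)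
    (F' A' : X →L[ℝ] Y)
    (hdF : HasFDerivAt F F' uk) (hdA : HasFDerivAt A A' uk)
    (hLF : ‖F'‖ ≤ LF) (hLA : ‖A'‖ ≤ LA)
    (htcc : ‖F uk - F udag - F' (uk - udag)‖ ≤ ν * ‖F uk - F udag‖)
    (hAres : ‖A uk - yδ‖ ≤ CA)
    (hdisc : τ * δ ≤ ‖F uk - yδ‖)
    (hCτ : Cτ = 1 - LF ^ 2 - ν - (1 + ν) / τ) (hCτ0 : 0 ≤ Cτ)
    (hlam1 : lam * LA * CA ≤ ρ)
    (hlam2 : lam ≤ Clam * ‖F uk - yδ‖ ^ 2) :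
    ‖(uk - ContinuousLinearMap.adjoint F' (F uk - yδ)
          - lam • ContinuousLinearMap.adjoint A' (A uk - yδ)) - udag‖ ^ 2
        - ‖uk - udag‖ ^ 2
      ≤ -2 * (Cτ - 2 * LA * CA * Clam * ρ) * ‖F uk - yδ‖ ^ 2 := by
  set s : Y := F uk - yδ with hs
  set a : Y := A uk - yδ with ha
  set e : X := uk - udag with he
  set p : X := ContinuousLinearMap.adjoint F' s with hp
  set q : X := ContinuousLinearMap.adjoint A' a with hq
  set r : Y := F uk - F udag - F' e with hr
  set w : X := e - p with hw
  have hre : (uk - p - lam • q) - udag = w - lam • q := by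
    rw [hw, he]; abel
  rw [hre]
  -- basic nonneg facts
  have hsn : (0:ℝ) ≤ ‖s‖ := norm_nonneg _
  have hδ0 : (0:ℝ) ≤ δ := le_trans (norm_nonneg _) hnoise
  have hLA0 : (0:ℝ) ≤ LA := le_trans (norm_nonneg _) hLA
  have hLF0 : (0:ℝ) ≤ LF := le_trans (norm_nonneg _) hLF
  have heρ : ‖e‖ ≤ ρ := by
    rw [he, ← dist_eq_norm]; exact Metric.mem_closedBall.mp huk
  -- expansion of the step
  have hexp : ‖w - lam • q‖ ^ 2 = ‖w‖ ^ 2 - 2 * (lam * ⟪w, q⟫) + lam ^ 2 * ‖q‖ ^ 2 := by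
    rw [norm_sub_sq_real, real_inner_smul_right, norm_smul]
    rw [Real.norm_eq_abs, abs_of_nonneg hlam, mul_pow]
  have hwexp : ‖w‖ ^ 2 = ‖e‖ ^ 2 - 2 * ⟪s, F' e⟫ + ‖p‖ ^ 2 := by
    rw [hw, norm_sub_sq_real, hp, ContinuousLinearMap.adjoint_inner_right,
      real_inner_comm (F' e) s]
  -- bound ⟪s, F' e⟫ from below
  have hFe : F' e = s + (yδ - y) - r := by
    rw [hr, hs, hy]; abel
  have hkey : (1 - ν - (1 + ν) / τ) * ‖s‖ ^ 2 ≤ ⟪s, F' e⟫ := by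
    have h1 : ⟪s, F' e⟫ = ‖s‖ ^ 2 + ⟪s, yδ - y⟫ - ⟪s, r⟫ := by
      rw [hFe, inner_sub_right, inner_add_right, real_inner_self_eq_norm_sq]
    have h2 : |⟪s, yδ - y⟫| ≤ ‖s‖ * δ :=
      le_trans (abs_real_inner_le_norm _ _)
        (mul_le_mul_of_nonneg_left hnoise hsn)
    have hFF : ‖F uk - F udag‖ ≤ ‖s‖ + δ := by
      have : F uk - F udag = s + (yδ - y) := by rw [hs, hy]; abel
      rw [this]
      exact le_trans (norm_add_le _ _) (by linarith)
    have h3 : |⟪s, r⟫| ≤ ‖s‖ * (ν * (‖s‖ + δ)) := by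
      refine le_trans (abs_real_inner_le_norm _ _) ?_
      refine mul_le_mul_of_nonneg_left (le_trans htcc ?_) hsn
      exact mul_le_mul_of_nonneg_left hFF hν.le
    have hδs : δ * ‖s‖ ≤ ‖s‖ ^ 2 / τ := by
      have hdt : δ ≤ ‖s‖ / τ := (le_div_iff₀ hτ).mpr (by nlinarith)
      calc δ * ‖s‖ ≤ ‖s‖ / τ * ‖s‖ := mul_le_mul_of_nonneg_right hdt hsn
      _ = ‖s‖ ^ 2 / τ := by ring
    have habs1 := abs_le.mp h2
    have habs2 := abs_le.mp h3
    have hdiv : (1 + ν) / τ * ‖s‖ ^ 2 = (1 + ν) * (‖s‖ ^ 2 / τ) := by ring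
    rw [h1]
    have hmul := mul_le_mul_of_nonneg_left hδs (by linarith : (0:ℝ) ≤ 1 + ν)
    have hexpand : (1 - ν - (1 + ν) / τ) * ‖s‖ ^ 2
        = ‖s‖ ^ 2 - ν * ‖s‖ ^ 2 - (1 + ν) * (‖s‖ ^ 2 / τ) := by ring
    rw [hexpand]
    have e2 : ‖s‖ * (ν * (‖s‖ + δ)) = ν * ‖s‖ ^ 2 + (1 + ν) * (δ * ‖s‖) - δ * ‖s‖ := by ring
    rw [e2] at habs2
    linarith [habs1.1, habs2.2]
  -- bound ‖p‖
  have hpn : ‖p‖ ≤ LF * ‖s‖ := by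
    refine le_trans (ContinuousLinearMap.le_opNorm _ _) ?_
    rw [LinearIsometryEquiv.norm_map]
    exact mul_le_mul_of_nonneg_right hLF hsn
  have hp2 : ‖p‖ ^ 2 ≤ LF ^ 2 * ‖s‖ ^ 2 := by
    calc ‖p‖ ^ 2 ≤ (LF * ‖s‖) ^ 2 := pow_le_pow_left₀ (norm_nonneg p) hpn 2
    _ = LF ^ 2 * ‖s‖ ^ 2 := by ring
  -- monotonicity estimate for w
  have hwle : ‖w‖ ^ 2 ≤ ‖e‖ ^ 2 - 2 * Cτ * ‖s‖ ^ 2 - LF ^ 2 * ‖s‖ ^ 2 := by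
    rw [hwexp, hCτ]
    have hmul := mul_le_mul_of_nonneg_left hkey (by norm_num : (0:ℝ) ≤ 2)
    have hexpand : 2 * ((1 - ν - (1 + ν) / τ) * ‖s‖ ^ 2)
        = 2 * (1 - LF ^ 2 - ν - (1 + ν) / τ) * ‖s‖ ^ 2 + 2 * (LF ^ 2 * ‖s‖ ^ 2) := by ring
    linarith
  have hwρ : ‖w‖ ≤ ρ := by
    have h2 : ‖w‖ ^ 2 ≤ ρ ^ 2 := by
      have he2 : ‖e‖ ^ 2 ≤ ρ ^ 2 := pow_le_pow_left₀ (norm_nonneg e) heρ 2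
      have h3 : 0 ≤ 2 * Cτ * ‖s‖ ^ 2 := by positivity
      have h4 : 0 ≤ LF ^ 2 * ‖s‖ ^ 2 := by positivity
      linarith
    exact (pow_le_pow_iff_left₀ (norm_nonneg w) hρ.le two_ne_zero).mp h2
  -- bound ‖q‖
  have hqn : ‖q‖ ≤ LA * CA := by
    refine le_trans (ContinuousLinearMap.le_opNorm _ _) ?_
    rw [LinearIsometryEquiv.norm_map]
    exact mul_le_mul hLA hAres (norm_nonneg _) hLA0
  have hiq : -(LA * CA * ρ) ≤ ⟪w, q⟫ := by
    have hb : ‖w‖ * ‖q‖ ≤ LA * CA * ρ :=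
      (mul_le_mul hwρ hqn (norm_nonneg _) hρ.le).trans_eq (by ring)
    have h := abs_le.mp ((abs_real_inner_le_norm w q).trans hb)
    linarith [h.1]
  -- combine
  rw [hexp]
  have hlq : lam * ‖q‖ ≤ ρ := by
    refine le_trans ?_ hlam1
    calc lam * ‖q‖ ≤ lam * (LA * CA) := mul_le_mul_of_nonneg_left hqn hlam
    _ = lam * LA * CA := by ring
  have hq2 : lam ^ 2 * ‖q‖ ^ 2 ≤ lam * (LA * CA) * ρ := by
    have h0 : (0:ℝ) ≤ lam * ‖q‖ := mul_nonneg hlam (norm_nonneg _)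
    have ha1 : lam * ‖q‖ ≤ lam * (LA * CA) := mul_le_mul_of_nonneg_left hqn hlam
    calc lam ^ 2 * ‖q‖ ^ 2 = (lam * ‖q‖) * (lam * ‖q‖) := by ring
    _ ≤ (lam * ‖q‖) * ρ := mul_le_mul_of_nonneg_left hlq h0
    _ ≤ (lam * (LA * CA)) * ρ := mul_le_mul_of_nonneg_right ha1 hρ.le
    _ = lam * (LA * CA) * ρ := by ring
  have hcross : -2 * (lam * ⟪w, q⟫) ≤ 2 * (lam * (LA * CA * ρ)) := by
    have hm := mul_le_mul_of_nonneg_left hiq hlam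
    have hr2 : lam * -(LA * CA * ρ) = -(lam * (LA * CA * ρ)) := by ring
    rw [hr2] at hm
    linarith
  have hnn : (0:ℝ) ≤ LA * CA * ρ := mul_nonneg (mul_nonneg hLA0 hCA.le) hρ.le
  have hlamρ : lam * (LA * CA * ρ) ≤ Clam * ‖s‖ ^ 2 * (LA * CA * ρ) :=
    mul_le_mul_of_nonneg_right hlam2 hnn
  have hq2' : lam ^ 2 * ‖q‖ ^ 2 ≤ Clam * ‖s‖ ^ 2 * (LA * CA * ρ) := by
    refine hq2.trans ?_
    calc lam * (LA * CA) * ρ = lam * (LA * CA * ρ) := by ring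
    _ ≤ Clam * ‖s‖ ^ 2 * (LA * CA * ρ) := hlamρ
  have hfin1 : 0 ≤ LF ^ 2 * ‖s‖ ^ 2 := by positivity
  have hfin2 : 0 ≤ Clam * ‖s‖ ^ 2 * (LA * CA * ρ) := by positivity
  have hrhs : -2 * (Cτ - 2 * LA * CA * Clam * ρ) * ‖s‖ ^ 2
      = (-2 * Cτ * ‖s‖ ^ 2) + 4 * (Clam * ‖s‖ ^ 2 * (LA * CA * ρ)) := by ring
  rw [hrhs]
  linarith
end

section
/- Under the hypotheses of the one-step descent inequality (u_k ∈ B_ρ(u†); tangential cone condition with constant ν at u_k; ‖F'(u_k)‖ ≤ L_F; ‖Â'(u_k)‖ ≤ L_Â; ‖Â(u_k) − y^δ‖ ≤ C_Â^δ; ‖F(u_k) − y^δ‖ ≥ τδ with C_τ = 1 − L_F² − ν − (1+ν)/τ ≥ 0; λ_k·L_Â·C_Â^δ ≤ ρ and λ_k ≤ C_λ^δ·‖F(u_k) − y^δ‖²), and assuming additionally C_τ − 2·L_Â·C_Â^δ·C_λ^δ·ρ > 0, the next iterate u_{k+1} = u_k − F'(u_k)*(F(u_k) − y^δ) − λ_k·Â'(u_k)*(Â(u_k)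 − y^δ) satisfies ‖u_{k+1} − u†‖ ≤ ‖u_k − u†‖ and u_{k+1} ∈ B_ρ(u†). -/
open scoped RealInnerProductSpace

set_option maxHeartbeats 1000000 in
/-- Proposition 2.3 (monotonicity): under the hypotheses of the one-step descent inequality and
assuming additionally `C_τ − 2·L_Â·C_Â^δ·C_λ^δ·ρ > 0`, the next iterate
`u_{k+1} = u_k − F'(u_k)*(F(u_k) − yδ) − λ_k·Â'(u_k)*(Â(u_k) − yδ)` satisfies
`‖u_{k+1} − u†‖ ≤ ‖u_k − u†‖` and `u_{k+1} ∈ B_ρ(u†)`. -/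
theorem stmt4
    {X Y : Type*}
    [NormedAddCommGroup X] [InnerProductSpace ℝ X] [CompleteSpace X]
    [NormedAddCommGroup Y] [InnerProductSpace ℝ Y] [CompleteSpace Y]
    (F A : X → Y) (udag : X) (y yδ : Y) (δ ρ LF LA ν τ Cτ CA Clam lam : ℝ)
    (hy : y = F udag) (hρ : 0 < ρ) (hν : 0 < ν) (hτ : 0 < τ)
    (hCA : 0 < CA) (hClam : 0 < Clam) (hlam : 0 ≤ lam)
    (hnoise : ‖yδ - y‖ ≤ δ)
    (uk : X) (huk : uk ∈ Metric.closedBall udag ρ)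
    (F' A' : X →L[ℝ] Y)
    (hdF : HasFDerivAt F F' uk) (hdA : HasFDerivAt A A' uk)
    (hLF : ‖F'‖ ≤ LF) (hLA : ‖A'‖ ≤ LA)
    (htcc : ‖F uk - F udag - F' (uk - udag)‖ ≤ ν * ‖F uk - F udag‖)
    (hAres : ‖A uk - yδ‖ ≤ CA)
    (hdisc : τ * δ ≤ ‖F uk - yδ‖)
    (hCτ : Cτ = 1 - LF ^ 2 - ν - (1 + ν) / τ) (hCτ0 : 0 ≤ Cτ)
    (hlam1 : lam * LA * CA ≤ ρ)
    (hlam2 : lam ≤ Clam * ‖F uk - yδ‖ ^ 2)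
    (hpos : 0 < Cτ - 2 * LA * CA * Clam * ρ) :
    ‖(uk - ContinuousLinearMap.adjoint F' (F uk - yδ)
          - lam • ContinuousLinearMap.adjoint A' (A uk - yδ)) - udag‖
        ≤ ‖uk - udag‖ ∧
      (uk - ContinuousLinearMap.adjoint F' (F uk - yδ)
          - lam • ContinuousLinearMap.adjoint A' (A uk - yδ)) ∈ Metric.closedBall udag ρ := by
  set r : Y := F uk - yδ with hr
  set a : Y := A uk - yδ with ha
  set e : X := uk - udag with he
  set Fs : X := ContinuousLinearMap.adjoint F' r with hFs
  set As : X := ContinuousLinearMap.adjoint A' a with hAs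
  clear_value Fs As e a r
  have hδ0 : 0 ≤ δ := le_trans (norm_nonneg _) hnoise
  have hLF0 : 0 ≤ LF := le_trans (norm_nonneg _) hLF
  have hLA0 : 0 ≤ LA := le_trans (norm_nonneg _) hLA
  have hre : ‖e‖ ≤ ρ := by
    simpa [he, dist_eq_norm] using huk
  -- rewrite the new iterate
  have hvec : (uk - Fs - lam • As) - udag = (e - Fs) - lam • As := by
    rw [he]; abel
  -- norm bounds for adjoint applications
  have hFsn : ‖Fs‖ ≤ LF * ‖r‖ := by
    calc ‖Fs‖ ≤ ‖ContinuousLinearMap.adjoint F'‖ * ‖r‖ := by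
          rw [hFs]; exact (ContinuousLinearMap.adjoint F').le_opNorm r
      _ = ‖F'‖ * ‖r‖ := by rw [ContinuousLinearMap.adjoint.norm_map]
      _ ≤ LF * ‖r‖ := mul_le_mul_of_nonneg_right hLF (norm_nonneg _)
  have hAsn : ‖As‖ ≤ LA * CA := by
    calc ‖As‖ ≤ ‖ContinuousLinearMap.adjoint A'‖ * ‖a‖ := by
          rw [hAs]; exact (ContinuousLinearMap.adjoint A').le_opNorm a
      _ = ‖A'‖ * ‖a‖ := by rw [ContinuousLinearMap.adjoint.norm_map]
      _ ≤ LA * CA := mul_le_mul hLA hAres (norm_nonneg _) hLA0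
  -- inner product estimate from the tangential cone condition
  have hFuk : F uk - F udag = r + (yδ - y) := by rw [hr, hy]; abel
  have hFe : F' e = r + (yδ - y) - (F uk - F udag - F' e) := by
    rw [hFuk]; abel
  have hnFuk : ‖F uk - F udag‖ ≤ ‖r‖ + δ := by
    rw [hFuk]
    exact le_trans (norm_add_le _ _) (by linarith)
  have hw : ‖F uk - F udag - F' e‖ ≤ ν * (‖r‖ + δ) := by
    refine le_trans (by simpa [he] using htcc) ?_
    exact mul_le_mul_of_nonneg_left hnFuk hν.le
  have hδr : δ * τ ≤ ‖r‖ := by linarith [hdisc]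
  have hinner : (1 - ν) * ‖r‖ ^ 2 - (1 + ν) * δ * ‖r‖ ≤ ⟪r, F' e⟫ := by
    have h1 : ⟪r, F' e⟫ = ‖r‖ ^ 2 + ⟪r, yδ - y⟫ - ⟪r, F uk - F udag - F' e⟫ := by
      conv_lhs => rw [hFe]
      rw [inner_sub_right, inner_add_right, real_inner_self_eq_norm_sq]
    have h2 : |⟪r, yδ - y⟫| ≤ ‖r‖ * δ := by
      refine le_trans (abs_real_inner_le_norm _ _) ?_
      exact mul_le_mul_of_nonneg_left hnoise (norm_nonneg _)
    have h3 : |⟪r, F uk - F udag - F' e⟫| ≤ ‖r‖ * (ν * (‖r‖ + δ)) := by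
      refine le_trans (abs_real_inner_le_norm _ _) ?_
      exact mul_le_mul_of_nonneg_left hw (norm_nonneg _)
    have h2' := abs_le.mp h2
    have h3' := abs_le.mp h3
    nlinarith [norm_nonneg r]
  -- Landweber half-step estimate
  have hv : ‖e - Fs‖ ^ 2 ≤ ‖e‖ ^ 2 - 2 * Cτ * ‖r‖ ^ 2 := by
    have hexp : ‖e - Fs‖ ^ 2 = ‖e‖ ^ 2 - 2 * ⟪e, Fs⟫ + ‖Fs‖ ^ 2 := norm_sub_sq_real e Fs
    have hadj : ⟪e, Fs⟫ = ⟪r, F' e⟫ := by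
      rw [real_inner_comm, hFs, ContinuousLinearMap.adjoint_inner_left]
    have hFs2 : ‖Fs‖ ^ 2 ≤ LF ^ 2 * ‖r‖ ^ 2 := by
      nlinarith [norm_nonneg Fs, norm_nonneg r]
    -- δ * ‖r‖ ≤ ‖r‖^2 / τ
    have hδr2 : (1 + ν) * δ * ‖r‖ ≤ ((1 + ν) / τ) * ‖r‖ ^ 2 := by
      rw [div_mul_eq_mul_div, le_div_iff₀ hτ]
      nlinarith [mul_le_mul_of_nonneg_left hδr
        (mul_nonneg (by linarith : (0:ℝ) ≤ 1 + ν) (norm_nonneg r))]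
    rw [hexp, hadj, hCτ]
    nlinarith [hinner, hFs2, hδr2]
  have hvnorm : ‖e - Fs‖ ≤ ‖e‖ := by
    have h2 : ‖e - Fs‖ ^ 2 ≤ ‖e‖ ^ 2 := by nlinarith [sq_nonneg ‖r‖]
    exact (abs_le_of_sq_le_sq' h2 (norm_nonneg e)).2
  -- full step estimate
  have hfull : ‖(e - Fs) - lam • As‖ ^ 2 ≤ ‖e‖ ^ 2 := by
    have hexp : ‖(e - Fs) - lam • As‖ ^ 2
        = ‖e - Fs‖ ^ 2 - 2 * ⟪e - Fs, lam • As⟫ + ‖lam • As‖ ^ 2 :=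
      norm_sub_sq_real _ _
    have hsm : ⟪e - Fs, lam • As⟫ = lam * ⟪e - Fs, As⟫ := real_inner_smul_right _ _ _
    have hcs := abs_le.mp (abs_real_inner_le_norm (e - Fs) As)
    have hnsm : ‖lam • As‖ = lam * ‖As‖ := by
      rw [norm_smul, Real.norm_eq_abs, abs_of_nonneg hlam]
    have hC0 : 0 ≤ LA * CA := mul_nonneg hLA0 hCA.le
    have hvρ : ‖e - Fs‖ ≤ ρ := le_trans hvnorm hre
    rw [hexp, hsm, hnsm]
    have hnv0 : 0 ≤ ‖e - Fs‖ := norm_nonneg _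
    have hnA0 : 0 ≤ ‖As‖ := norm_nonneg _
    have hnr0 : 0 ≤ ‖r‖ := norm_nonneg _
    set nv : ℝ := ‖e - Fs‖ with hnv
    set nA : ℝ := ‖As‖ with hnA
    set nr : ℝ := ‖r‖ with hnr
    set nE : ℝ := ‖e‖ with hnE
    set ip : ℝ := ⟪e - Fs, As⟫ with hipd
    clear_value nv nA nr nE ip
    -- now a purely scalar inequality
    have hprod : nv * nA ≤ ρ * (LA * CA) :=
      mul_le_mul hvρ hAsn hnA0 hρ.le
    have hip : -(LA * CA * ρ) ≤ ip := by linarith only [hcs.1, hprod]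
    have hb1 : -(lam * (LA * CA) * ρ) ≤ lam * ip := by
      linarith only [mul_le_mul_of_nonneg_left hip hlam]
    have hb2 : (lam * nA) ^ 2 ≤ lam * (LA * CA) * ρ := by
      have h1 : lam * nA ≤ lam * (LA * CA) := mul_le_mul_of_nonneg_left hAsn hlam
      have h2 : (lam * nA) ^ 2 ≤ (lam * (LA * CA)) ^ 2 :=
        pow_le_pow_left₀ (mul_nonneg hlam hnA0) h1 2
      have h3 := mul_le_mul_of_nonneg_right hlam1 (mul_nonneg hlam hC0)
      linarith only [h2, h3]
    have hlamr : lam * (LA * CA) * ρ ≤ Clam * nr ^ 2 * (LA * CA) * ρ :=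
      mul_le_mul_of_nonneg_right (mul_le_mul_of_nonneg_right hlam2 hC0) hρ.le
    have haux : 0 ≤ (2 * Cτ - 3 * (LA * CA * Clam * ρ)) * nr ^ 2 := by
      refine mul_nonneg ?_ (sq_nonneg _)
      have hK0 : 0 ≤ LA * CA * Clam * ρ :=
        mul_nonneg (mul_nonneg (mul_nonneg hLA0 hCA.le) hClam.le) hρ.le
      linarith only [hpos, hK0]
    linarith only [hv, hb1, hb2, hlamr, haux]
  have hfinal : ‖(e - Fs) - lam • As‖ ≤ ‖e‖ :=
    (abs_le_of_sq_le_sq' hfull (norm_nonneg e)).2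
  constructor
  · rw [hvec]; exact hfinal
  · rw [Metric.mem_closedBall, dist_eq_norm, hvec]
    exact le_trans hfinal hre
end

section
/- Let (u_k) be iterates of the iteratively regularized Landweber iteration u_{k+1} = u_k − F'(u_k)*(F(u_k) − y^δ) − λ_k·Â'(u_k)*(Â(u_k) − y^δ) with noisy data ‖y^δ − y‖ ≤ δ, y = F(u†). Suppose that for every k with 0 ≤ k < k_*: u_k ∈ B_ρ(u†), the tangential cone condition with constant ν holds at u_k, ‖F'(u_k)‖ ≤ L_F, ‖Â'(u_k)‖ ≤ L_Â, ‖Â(u_k) − y^δ‖ ≤ C_Â^δ, ‖F(u_k) − y^δ‖ ≥ τδ where C_τ = 1 − L_F² − ν − (1+ν)/τ ≥ 0, λ_k·L_Â·C_Â^δ ≤ ρ and λ_k ≤ C_λ^δ·‖F(u_k) − y^δ‖², and that C := C_τ − 2·L_Â·C_Â^δ·C_λ^δ·ρ > 0. Then k_*·(τδ)² ≤ Σ_{k=0}^{k_*−1} ‖F(u_k) − y^δ‖² ≤ ‖u_0 − u†‖² / (2C). -/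
open scoped RealInnerProductSpace

set_option maxHeartbeats 1000000 in
/-- One-step monotonicity estimate for the iteratively regularized Landweber iteration. -/
lemma landweber_step
    {X Y : Type*}
    [NormedAddCommGroup X] [InnerProductSpace ℝ X] [CompleteSpace X]
    [NormedAddCommGroup Y] [InnerProductSpace ℝ Y] [CompleteSpace Y]
    (T S : X →L[ℝ] Y) (e : X) (r a d : Y)
    (δ ρ LF LA ν τ Cτ CA Clam lamk : ℝ)
    (hρ : 0 < ρ) (hν : 0 < ν) (hτ : 0 < τ) (hCA : 0 < CA) (hClam : 0 < Clam)
    (hd : ‖d‖ ≤ δ)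
    (hLF' : ‖T‖ ≤ LF) (hLA' : ‖S‖ ≤ LA)
    (htcc' : ‖r + d - T e‖ ≤ ν * ‖r + d‖)
    (ha' : ‖a‖ ≤ CA)
    (hτδ : τ * δ ≤ ‖r‖)
    (hCτ : Cτ = 1 - LF ^ 2 - ν - (1 + ν) / τ) (hCτ0 : 0 ≤ Cτ)
    (hl0 : 0 ≤ lamk) (hl1 : lamk * LA * CA ≤ ρ) (hl2 : lamk ≤ Clam * ‖r‖ ^ 2)
    (heρ : ‖e‖ ≤ ρ) :
    ‖e - ContinuousLinearMap.adjoint T r - lamk • ContinuousLinearMap.adjoint S a‖ ^ 2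
      ≤ ‖e‖ ^ 2 - 2 * (Cτ - 2 * LA * CA * Clam * ρ) * ‖r‖ ^ 2 := by
  have hδ0 : 0 ≤ δ := le_trans (norm_nonneg d) hd
  have hr0 : (0:ℝ) ≤ ‖r‖ := norm_nonneg r
  have hLF0 : 0 ≤ LF := le_trans (norm_nonneg T) hLF'
  have hLA0 : 0 ≤ LA := le_trans (norm_nonneg S) hLA'
  have hδr : δ * ‖r‖ ≤ ‖r‖ ^ 2 / τ := by
    rw [le_div_iff₀ hτ]
    linarith [mul_le_mul_of_nonneg_right hτδ hr0]
  -- inner product estimate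
  have hrd : ‖r + d‖ ≤ ‖r‖ + δ := le_trans (norm_add_le r d) (by linarith)
  have hw : ‖r + d - T e‖ ≤ ν * (‖r‖ + δ) :=
    le_trans htcc' (mul_le_mul_of_nonneg_left hrd hν.le)
  have hinner : (1 - ν - (1 + ν) / τ) * ‖r‖ ^ 2 ≤ ⟪T e, r⟫ := by
    have hTe : T e = r + d - (r + d - T e) := by abel
    have hsplit : ⟪T e, r⟫ = ‖r‖ ^ 2 + ⟪d, r⟫ - ⟪r + d - T e, r⟫ := by
      conv_lhs => rw [hTe]
      rw [inner_sub_left, inner_add_left, real_inner_self_eq_norm_sq]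
    have h2' : -(δ * ‖r‖) ≤ ⟪d, r⟫ := by
      have := neg_le_of_abs_le (abs_real_inner_le_norm d r)
      have h2 : ‖d‖ * ‖r‖ ≤ δ * ‖r‖ := mul_le_mul_of_nonneg_right hd hr0
      linarith
    have h3' : ⟪r + d - T e, r⟫ ≤ ν * (‖r‖ + δ) * ‖r‖ := by
      have := le_of_abs_le (abs_real_inner_le_norm (r + d - T e) r)
      have h3 : ‖r + d - T e‖ * ‖r‖ ≤ ν * (‖r‖ + δ) * ‖r‖ :=
        mul_le_mul_of_nonneg_right hw hr0
      linarith
    have hντ : (1 + ν) * (δ * ‖r‖) ≤ (1 + ν) / τ * ‖r‖ ^ 2 := by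
      have h4 : (1 + ν) * (δ * ‖r‖) ≤ (1 + ν) * (‖r‖ ^ 2 / τ) :=
        mul_le_mul_of_nonneg_left hδr (by linarith)
      calc (1 + ν) * (δ * ‖r‖) ≤ (1 + ν) * (‖r‖ ^ 2 / τ) := h4
        _ = (1 + ν) / τ * ‖r‖ ^ 2 := by ring
    rw [hsplit]
    linarith [h2', h3', hντ]
  -- estimate for p = e - T* r
  have hTsr : ‖ContinuousLinearMap.adjoint T r‖ ≤ LF * ‖r‖ := by
    refine le_trans ((ContinuousLinearMap.adjoint T).le_opNorm r) ?_
    have hn : ‖ContinuousLinearMap.adjoint T‖ = ‖T‖ :=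
      LinearIsometryEquiv.norm_map ContinuousLinearMap.adjoint T
    rw [hn]
    exact mul_le_mul_of_nonneg_right hLF' hr0
  have hpsq : ‖e - ContinuousLinearMap.adjoint T r‖ ^ 2
      ≤ ‖e‖ ^ 2 - (2 * Cτ + LF ^ 2) * ‖r‖ ^ 2 := by
    have hexp : ‖e - ContinuousLinearMap.adjoint T r‖ ^ 2
        = ‖e‖ ^ 2 - 2 * ⟪e, ContinuousLinearMap.adjoint T r⟫
          + ‖ContinuousLinearMap.adjoint T r‖ ^ 2 :=
      norm_sub_sq_real e (ContinuousLinearMap.adjoint T r)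
    have hadj : ⟪e, ContinuousLinearMap.adjoint T r⟫ = ⟪T e, r⟫ :=
      ContinuousLinearMap.adjoint_inner_right T e r
    have hTsr2 : ‖ContinuousLinearMap.adjoint T r‖ ^ 2 ≤ LF ^ 2 * ‖r‖ ^ 2 := by
      simpa [mul_pow] using
        pow_le_pow_left₀ (norm_nonneg (ContinuousLinearMap.adjoint T r)) hTsr 2
    rw [hexp, hadj, hCτ]
    linarith [hinner, hTsr2]
  have hpe : ‖e - ContinuousLinearMap.adjoint T r‖ ≤ ρ := by
    have ha1 : ‖e‖ ^ 2 ≤ ρ ^ 2 := pow_le_pow_left₀ (norm_nonneg e) heρ 2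
    have ha2 : 0 ≤ Cτ * ‖r‖ ^ 2 := mul_nonneg hCτ0 (sq_nonneg _)
    have ha3 : 0 ≤ LF ^ 2 * ‖r‖ ^ 2 := by positivity
    have ha4 : ‖e - ContinuousLinearMap.adjoint T r‖ ^ 2 ≤ ρ ^ 2 := by
      linarith [hpsq]
    exact (pow_le_pow_iff_left₀ (norm_nonneg _) hρ.le (by norm_num)).mp ha4
  -- the q term
  have hSsa : ‖ContinuousLinearMap.adjoint S a‖ ≤ LA * CA := by
    refine le_trans ((ContinuousLinearMap.adjoint S).le_opNorm a) ?_
    have hn : ‖ContinuousLinearMap.adjoint S‖ = ‖S‖ :=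
      LinearIsometryEquiv.norm_map ContinuousLinearMap.adjoint S
    rw [hn]
    exact mul_le_mul hLA' ha' (norm_nonneg a) hLA0
  have hqnorm : ‖lamk • ContinuousLinearMap.adjoint S a‖
      = lamk * ‖ContinuousLinearMap.adjoint S a‖ := by
    rw [norm_smul, Real.norm_eq_abs, abs_of_nonneg hl0]
  have hq0 : 0 ≤ ‖lamk • ContinuousLinearMap.adjoint S a‖ := norm_nonneg _
  have hs1 : ‖lamk • ContinuousLinearMap.adjoint S a‖ ≤ ρ := by
    rw [hqnorm]
    calc lamk * ‖ContinuousLinearMap.adjoint S a‖ ≤ lamk * (LA * CA) :=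
          mul_le_mul_of_nonneg_left hSsa hl0
      _ = lamk * LA * CA := by ring
      _ ≤ ρ := hl1
  have hs2 : ‖lamk • ContinuousLinearMap.adjoint S a‖ ≤ LA * CA * Clam * ‖r‖ ^ 2 := by
    rw [hqnorm]
    calc lamk * ‖ContinuousLinearMap.adjoint S a‖ ≤ (Clam * ‖r‖ ^ 2) * (LA * CA) := by
          apply mul_le_mul hl2 hSsa (norm_nonneg _)
          positivity
      _ = LA * CA * Clam * ‖r‖ ^ 2 := by ring
  -- combine
  have hexp2 : ‖(e - ContinuousLinearMap.adjoint T r) - lamk • ContinuousLinearMap.adjoint S a‖ ^ 2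
      = ‖e - ContinuousLinearMap.adjoint T r‖ ^ 2
        - 2 * ⟪e - ContinuousLinearMap.adjoint T r, lamk • ContinuousLinearMap.adjoint S a⟫
        + ‖lamk • ContinuousLinearMap.adjoint S a‖ ^ 2 :=
    norm_sub_sq_real _ _
  have hcross : -⟪e - ContinuousLinearMap.adjoint T r, lamk • ContinuousLinearMap.adjoint S a⟫
      ≤ ρ * ‖lamk • ContinuousLinearMap.adjoint S a‖ := by
    have h1 := neg_le_of_abs_le
      (abs_real_inner_le_norm (e - ContinuousLinearMap.adjoint T r)
        (lamk • ContinuousLinearMap.adjoint S a))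
    have h2 : ‖e - ContinuousLinearMap.adjoint T r‖
          * ‖lamk • ContinuousLinearMap.adjoint S a‖
        ≤ ρ * ‖lamk • ContinuousLinearMap.adjoint S a‖ :=
      mul_le_mul_of_nonneg_right hpe hq0
    linarith
  have hs2ρ : ρ * ‖lamk • ContinuousLinearMap.adjoint S a‖
      ≤ ρ * (LA * CA * Clam * ‖r‖ ^ 2) := mul_le_mul_of_nonneg_left hs2 hρ.le
  have hqsq : ‖lamk • ContinuousLinearMap.adjoint S a‖
        * ‖lamk • ContinuousLinearMap.adjoint S a‖
      ≤ ρ * ‖lamk • ContinuousLinearMap.adjoint S a‖ :=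
    mul_le_mul_of_nonneg_right hs1 hq0
  have hLF2 : 0 ≤ LF ^ 2 * ‖r‖ ^ 2 := by positivity
  have hextra : 0 ≤ LA * CA * Clam * ρ * ‖r‖ ^ 2 := by positivity
  rw [hexp2]
  linarith [hpsq, hcross, hs2ρ, hqsq, hLF2, hextra]

/-- Corollary 2.5: if the hypotheses of the monotonicity result hold for every iterate
`u_k`, `0 ≤ k < k_*`, of the iteratively regularized Landweber iteration, and
`C := C_τ − 2·L_Â·C_Â^δ·C_λ^δ·ρ > 0`, then
`k_*·(τδ)² ≤ Σ_{k=0}^{k_*−1} ‖F(u_k) − yδ‖² ≤ ‖u_0 − u†‖²/(2C)`. -/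
theorem stmt5
    {X Y : Type*}
    [NormedAddCommGroup X] [InnerProductSpace ℝ X] [CompleteSpace X]
    [NormedAddCommGroup Y] [InnerProductSpace ℝ Y] [CompleteSpace Y]
    (F A : X → Y) (udag : X) (y yδ : Y) (δ ρ LF LA ν τ Cτ CA Clam : ℝ)
    (u : ℕ → X) (lam : ℕ → ℝ) (kstar : ℕ)
    (F' A' : X → X →L[ℝ] Y)
    (hy : y = F udag) (hρ : 0 < ρ) (hν : 0 < ν) (hτ : 0 < τ)
    (hCA : 0 < CA) (hClam : 0 < Clam)
    (hnoise : ‖yδ - y‖ ≤ δ)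
    (hiter : ∀ k < kstar,
      u (k + 1) = u k - ContinuousLinearMap.adjoint (F' (u k)) (F (u k) - yδ)
        - lam k • ContinuousLinearMap.adjoint (A' (u k)) (A (u k) - yδ))
    (hball : ∀ k < kstar, u k ∈ Metric.closedBall udag ρ)
    (hdF : ∀ k < kstar, HasFDerivAt F (F' (u k)) (u k))
    (hdA : ∀ k < kstar, HasFDerivAt A (A' (u k)) (u k))
    (hLF : ∀ k < kstar, ‖F' (u k)‖ ≤ LF)
    (hLA : ∀ k < kstar, ‖A' (u k)‖ ≤ LA)
    (htcc : ∀ k < kstar,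
      ‖F (u k) - F udag - (F' (u k)) (u k - udag)‖ ≤ ν * ‖F (u k) - F udag‖)
    (hAres : ∀ k < kstar, ‖A (u k) - yδ‖ ≤ CA)
    (hdisc : ∀ k < kstar, τ * δ ≤ ‖F (u k) - yδ‖)
    (hCτ : Cτ = 1 - LF ^ 2 - ν - (1 + ν) / τ) (hCτ0 : 0 ≤ Cτ)
    (hlam0 : ∀ k < kstar, 0 ≤ lam k)
    (hlam1 : ∀ k < kstar, lam k * LA * CA ≤ ρ)
    (hlam2 : ∀ k < kstar, lam k ≤ Clam * ‖F (u k) - yδ‖ ^ 2)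
    (hpos : 0 < Cτ - 2 * LA * CA * Clam * ρ) :
    (kstar : ℝ) * (τ * δ) ^ 2 ≤ ∑ k ∈ Finset.range kstar, ‖F (u k) - yδ‖ ^ 2 ∧
      ∑ k ∈ Finset.range kstar, ‖F (u k) - yδ‖ ^ 2
        ≤ ‖u 0 - udag‖ ^ 2 / (2 * (Cτ - 2 * LA * CA * Clam * ρ)) := by
  have hδ0 : 0 ≤ δ := le_trans (norm_nonneg _) hnoise
  have key : ∀ k < kstar,
      ‖u (k + 1) - udag‖ ^ 2 ≤ ‖u k - udag‖ ^ 2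
        - 2 * (Cτ - 2 * LA * CA * Clam * ρ) * ‖F (u k) - yδ‖ ^ 2 := by
    intro k hk
    have hterm : F (u k) - yδ + (yδ - y) = F (u k) - F udag := by rw [hy]; abel
    have htcc' : ‖(F (u k) - yδ) + (yδ - y) - (F' (u k)) (u k - udag)‖
        ≤ ν * ‖(F (u k) - yδ) + (yδ - y)‖ := by
      rw [hterm]; exact htcc k hk
    have heρ : ‖u k - udag‖ ≤ ρ := by
      have := hball k hk
      rwa [Metric.mem_closedBall, dist_eq_norm] at this
    have heq : u (k + 1) - udag
        = (u k - udag) - ContinuousLinearMap.adjoint (F' (u k)) (F (u k) - yδ)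
          - lam k • ContinuousLinearMap.adjoint (A' (u k)) (A (u k) - yδ) := by
      rw [hiter k hk]; abel
    rw [heq]
    exact landweber_step (F' (u k)) (A' (u k)) (u k - udag) (F (u k) - yδ)
      (A (u k) - yδ) (yδ - y) δ ρ LF LA ν τ Cτ CA Clam (lam k)
      hρ hν hτ hCA hClam hnoise (hLF k hk) (hLA k hk) htcc' (hAres k hk)
      (hdisc k hk) hCτ hCτ0 (hlam0 k hk) (hlam1 k hk) (hlam2 k hk) heρ
  have main : ∀ k ≤ kstar,
      2 * (Cτ - 2 * LA * CA * Clam * ρ)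
          * (∑ j ∈ Finset.range k, ‖F (u j) - yδ‖ ^ 2) + ‖u k - udag‖ ^ 2
        ≤ ‖u 0 - udag‖ ^ 2 := by
    intro k hk
    induction k with
    | zero => simp
    | succ n ih =>
      have hn : n < kstar := hk
      have h1 := key n hn
      have h2 := ih (le_of_lt hn)
      rw [Finset.sum_range_succ]
      linarith [h1, h2]
  constructor
  · have hterm : ∀ j ∈ Finset.range kstar, (τ * δ) ^ 2 ≤ ‖F (u j) - yδ‖ ^ 2 := by
      intro j hj
      exact pow_le_pow_left₀ (mul_nonneg hτ.le hδ0) (hdisc j (Finset.mem_range.mp hj)) 2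
    calc (kstar : ℝ) * (τ * δ) ^ 2
        = ∑ _j ∈ Finset.range kstar, (τ * δ) ^ 2 := by
          rw [Finset.sum_const, Finset.card_range, nsmul_eq_mul]
      _ ≤ ∑ j ∈ Finset.range kstar, ‖F (u j) - yδ‖ ^ 2 := Finset.sum_le_sum hterm
  · have h := main kstar le_rfl
    rw [le_div_iff₀ (by linarith : (0:ℝ) < 2 * (Cτ - 2 * LA * CA * Clam * ρ))]
    linarith [h, sq_nonneg ‖u kstar - udag‖]
end

section
/- Let (u_k) be iterates of the iteratively regularized Landweber iteration with exact data, i.e. u_{k+1} = u_k − F'(u_k)*(F(u_k) − y) − λ_k·Â'(u_k)*(Â(u_k) − y) with y = F(u†). Suppose for every k ∈ ℕ: u_k ∈ B_ρ(u†), the tangential cone condition with constant ν holds at u_k, ‖F'(u_k)‖ ≤ L_F, ‖Â'(u_k)‖ ≤ L_Â, ‖Â(u_k) − y‖ ≤ C_Â^0, λ_k·L_Â·C_Â^0 ≤ ρ and λ_k ≤ C_λ^0·‖F(u_k) − y‖², and that C := 1 − ν − L_F² − 2·L_Â·C_Â^0·C_λ^0·ρ > 0. Then the series Σ_{k=0}^{∞}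 ‖F(u_k) − y‖² converges and Σ_{k=0}^{∞} ‖F(u_k) − y‖² ≤ ‖u_0 − u†‖² / (2C); in particular ‖F(u_k) − y‖ → 0 as k → ∞. -/
open scoped RealInnerProductSpace

set_option maxHeartbeats 1000000 in
/-- Noise-free residual summability: for the iteratively regularized Landweber iteration with
exact data `y = F(u†)`, under the stated conditions with
`C := 1 − ν − L_F² − 2·L_Â·C_Â⁰·C_λ⁰·ρ > 0`, the series `Σ_k ‖F(u_k) − y‖²` converges, is
bounded by `‖u_0 − u†‖²/(2C)`, and in particular `‖F(u_k) − y‖ → 0`. -/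
theorem stmt6
    {X Y : Type*}
    [NormedAddCommGroup X] [InnerProductSpace ℝ X] [CompleteSpace X]
    [NormedAddCommGroup Y] [InnerProductSpace ℝ Y] [CompleteSpace Y]
    (F A : X → Y) (udag : X) (y : Y) (ρ LF LA ν CA Clam : ℝ)
    (u : ℕ → X) (lam : ℕ → ℝ)
    (F' A' : X → X →L[ℝ] Y)
    (hy : y = F udag) (hρ : 0 < ρ) (hν : 0 < ν)
    (hCA : 0 < CA) (hClam : 0 < Clam)
    (hiter : ∀ k : ℕ,
      u (k + 1) = u k - ContinuousLinearMap.adjoint (F' (u k)) (F (u k) - y)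
        - lam k • ContinuousLinearMap.adjoint (A' (u k)) (A (u k) - y))
    (hball : ∀ k, u k ∈ Metric.closedBall udag ρ)
    (hdF : ∀ k, HasFDerivAt F (F' (u k)) (u k))
    (hdA : ∀ k, HasFDerivAt A (A' (u k)) (u k))
    (hLF : ∀ k, ‖F' (u k)‖ ≤ LF)
    (hLA : ∀ k, ‖A' (u k)‖ ≤ LA)
    (htcc : ∀ k,
      ‖F (u k) - F udag - (F' (u k)) (u k - udag)‖ ≤ ν * ‖F (u k) - F udag‖)
    (hAres : ∀ k, ‖A (u k) - y‖ ≤ CA)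
    (hlam0 : ∀ k, 0 ≤ lam k)
    (hlam1 : ∀ k, lam k * LA * CA ≤ ρ)
    (hlam2 : ∀ k, lam k ≤ Clam * ‖F (u k) - y‖ ^ 2)
    (hpos : 0 < 1 - ν - LF ^ 2 - 2 * LA * CA * Clam * ρ) :
    Summable (fun k => ‖F (u k) - y‖ ^ 2) ∧
      (∑' k : ℕ, ‖F (u k) - y‖ ^ 2)
        ≤ ‖u 0 - udag‖ ^ 2 / (2 * (1 - ν - LF ^ 2 - 2 * LA * CA * Clam * ρ)) ∧
      Filter.Tendsto (fun k => ‖F (u k) - y‖) Filter.atTop (nhds 0) := by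
  set C : ℝ := 1 - ν - LF ^ 2 - 2 * LA * CA * Clam * ρ with hC
  have hLA0 : 0 ≤ LA := le_trans (norm_nonneg _) (hLA 0)
  -- key one-step decrease
  have hkey : ∀ k, 2 * C * ‖F (u k) - y‖ ^ 2
      ≤ ‖u k - udag‖ ^ 2 - ‖u (k + 1) - udag‖ ^ 2 := by
    intro k
    set e : X := u k - udag with he
    set e' : X := u (k + 1) - udag with he'
    set r : Y := F (u k) - y with hr
    set a : Y := A (u k) - y with ha
    set s1 : X := ContinuousLinearMap.adjoint (F' (u k)) r with hs1
    set s2 : X := ContinuousLinearMap.adjoint (A' (u k)) a with hs2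
    set l : ℝ := lam k with hl
    have hstep : e - s1 = e' + l • s2 := by
      rw [hs1, hs2, hl, hr, ha, he, he', hiter k]
      abel
    -- expand ‖e - s1‖² two ways
    have hB : ‖e - s1‖ ^ 2 = ‖e'‖ ^ 2 + 2 * (l * ⟪e', s2⟫) + l ^ 2 * ‖s2‖ ^ 2 := by
      rw [hstep, norm_add_sq_real, real_inner_smul_right, norm_smul]
      simp [mul_pow, abs_mul_abs_self, sq_abs]
    have hC2 : ‖e - s1‖ ^ 2 = ‖e‖ ^ 2 - 2 * ⟪r, (F' (u k)) e⟫ + ‖s1‖ ^ 2 := by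
      rw [norm_sub_sq_real, hs1, real_inner_comm, ContinuousLinearMap.adjoint_inner_left]
    -- tangential cone estimate
    have htc : (1 - ν) * ‖r‖ ^ 2 ≤ ⟪r, (F' (u k)) e⟫ := by
      have h1 : ⟪r, r - (F' (u k)) e⟫ ≤ ‖r‖ * ‖r - (F' (u k)) e‖ := real_inner_le_norm _ _
      have h2 : ‖r - (F' (u k)) e‖ ≤ ν * ‖r‖ := by
        have := htcc k
        rw [← hy] at this
        simpa [hr, he] using this
      have h3 : ⟪r, r - (F' (u k)) e⟫ = ‖r‖ ^ 2 - ⟪r, (F' (u k)) e⟫ := by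
        rw [inner_sub_right, real_inner_self_eq_norm_sq]
      nlinarith [norm_nonneg r, norm_nonneg (r - (F' (u k)) e)]
    -- norm bounds
    have hns1 : ‖s1‖ ≤ LF * ‖r‖ := by
      calc ‖s1‖ ≤ ‖ContinuousLinearMap.adjoint (F' (u k))‖ * ‖r‖ :=
            ContinuousLinearMap.le_opNorm _ _
        _ ≤ LF * ‖r‖ := by
            rw [LinearIsometryEquiv.norm_map ContinuousLinearMap.adjoint]
            exact mul_le_mul_of_nonneg_right (hLF k) (norm_nonneg _)
    have hs1sq : ‖s1‖ ^ 2 ≤ LF ^ 2 * ‖r‖ ^ 2 := by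
      nlinarith [norm_nonneg s1, norm_nonneg r, mul_nonneg (le_trans (norm_nonneg _) (hLF 0)) (norm_nonneg r)]
    have hns2 : ‖s2‖ ≤ LA * CA := by
      calc ‖s2‖ ≤ ‖ContinuousLinearMap.adjoint (A' (u k))‖ * ‖a‖ :=
            ContinuousLinearMap.le_opNorm _ _
        _ ≤ LA * CA := by
            rw [LinearIsometryEquiv.norm_map ContinuousLinearMap.adjoint]
            exact mul_le_mul (hLA k) (hAres k) (norm_nonneg _) hLA0
    have hne' : ‖e'‖ ≤ ρ := by
      have := hball (k + 1)
      simpa [he', dist_eq_norm] using this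
    have hcross : -(LA * CA * ρ) ≤ ⟪e', s2⟫ := by
      have h1 : |⟪e', s2⟫| ≤ ‖e'‖ * ‖s2‖ := abs_real_inner_le_norm _ _
      have h2 : ‖e'‖ * ‖s2‖ ≤ ρ * (LA * CA) :=
        mul_le_mul hne' hns2 (norm_nonneg _) (le_of_lt hρ)
      have := abs_le.mp (le_trans h1 h2)
      linarith [this.1]
    have hlcross : -(Clam * ‖r‖ ^ 2 * (LA * CA * ρ)) ≤ l * ⟪e', s2⟫ := by
      have h0 : 0 ≤ LA * CA * ρ := by positivity
      have h1 : l * (-(LA * CA * ρ)) ≤ l * ⟪e', s2⟫ :=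
        mul_le_mul_of_nonneg_left hcross (hlam0 k)
      have h2 : l * (LA * CA * ρ) ≤ Clam * ‖r‖ ^ 2 * (LA * CA * ρ) :=
        mul_le_mul_of_nonneg_right (hlam2 k) h0
      nlinarith
    have hrn : 0 ≤ ‖r‖ ^ 2 := sq_nonneg _
    have hCle : 2 * C ≤ 2 - 2 * ν - LF ^ 2 - 2 * (LA * CA * Clam * ρ) := by
      have h1 : 0 ≤ LF ^ 2 := sq_nonneg _
      have h2 : 0 ≤ LA * CA * Clam * ρ := by positivity
      rw [hC]; linarith
    have heq : ‖e'‖ ^ 2 = ‖e‖ ^ 2 - 2 * ⟪r, (F' (u k)) e⟫ + ‖s1‖ ^ 2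
        - 2 * (l * ⟪e', s2⟫) - l ^ 2 * ‖s2‖ ^ 2 := by linarith [hB, hC2]
    have hfin := mul_le_mul_of_nonneg_right hCle hrn
    clear_value e e' r a s1 s2 l C
    nlinarith [mul_nonneg (sq_nonneg l) (sq_nonneg ‖s2‖), htc, hs1sq, hlcross, heq, hfin]
  have hCpos : 0 < C := hpos
  -- telescoping partial sums
  have hsum : ∀ n, ∑ k ∈ Finset.range n, 2 * C * ‖F (u k) - y‖ ^ 2
      ≤ ‖u 0 - udag‖ ^ 2 - ‖u n - udag‖ ^ 2 := by
    intro n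
    induction n with
    | zero => simp
    | succ n ih =>
      rw [Finset.sum_range_succ]
      linarith [hkey n]
  have hbound : ∀ n, ∑ k ∈ Finset.range n, ‖F (u k) - y‖ ^ 2
      ≤ ‖u 0 - udag‖ ^ 2 / (2 * C) := by
    intro n
    rw [le_div_iff₀ (by positivity)]
    have h1 := hsum n
    have h2 : (∑ k ∈ Finset.range n, ‖F (u k) - y‖ ^ 2) * (2 * C)
        = ∑ k ∈ Finset.range n, 2 * C * ‖F (u k) - y‖ ^ 2 := by
      rw [Finset.sum_mul]; congr 1; ext k; ring
    rw [h2]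
    nlinarith [sq_nonneg ‖u n - udag‖]
  have hsummable : Summable (fun k => ‖F (u k) - y‖ ^ 2) :=
    summable_of_sum_range_le (fun k => sq_nonneg _) hbound
  refine ⟨hsummable, Summable.tsum_le_of_sum_range_le hsummable hbound, ?_⟩
  have hsq0 : Filter.Tendsto (fun k => ‖F (u k) - y‖ ^ 2) Filter.atTop (nhds 0) :=
    hsummable.tendsto_atTop_zero
  have hsqrt : Filter.Tendsto (fun k => Real.sqrt (‖F (u k) - y‖ ^ 2)) Filter.atTop
      (nhds (Real.sqrt 0)) := (Real.continuous_sqrt.continuousAt).tendsto.comp hsq0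
  simpa [Real.sqrt_sq (norm_nonneg _), Real.sqrt_zero] using hsqrt
end

section
/- Let X and Y be real Hilbert spaces, u† ∈ X with y = F(u†), and let (u_i) be elements of B_ρ(u†) such that F is Fréchet differentiable at each u_i and the two-point tangential cone condition ‖F(u) − F(v) − F'(u)(u − v)‖ ≤ ν‖F(u) − F(v)‖ holds with constant ν > 0 for all u, v ∈ B_ρ(u†). Let h ≤ j be indices such that ‖F(u_h) − y‖ ≤ ‖F(u_i) − y‖ for all h ≤ i ≤ j. Then Σ_{i=h}^{j−1} |⟨y − F(u_i), F'(u_i)(u_h − u†)⟩| ≤ (1 + 3ν)·Σ_{i=h}^{j−1} ‖y − F(u_i)‖². -/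
open scoped RealInnerProductSpace

/-- Estimate of the term `S_F` in the Cauchy-sequence argument (Theorem 2.6): under the
two-point tangential cone condition on `B_ρ(u†)`, if `h ≤ j` and
`‖F(u_h) − y‖ ≤ ‖F(u_i) − y‖` for all `h ≤ i ≤ j`, then
`Σ_{i=h}^{j−1} |⟨y − F(u_i), F'(u_i)(u_h − u†)⟩| ≤ (1 + 3ν)·Σ_{i=h}^{j−1} ‖y − F(u_i)‖²`. -/
theorem stmt7
    {X Y : Type*}
    [NormedAddCommGroup X] [InnerProductSpace ℝ X] [CompleteSpace X]
    [NormedAddCommGroup Y] [InnerProductSpace ℝ Y] [CompleteSpace Y]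
    (F : X → Y) (udag : X) (y : Y) (ρ ν : ℝ)
    (u : ℕ → X) (F' : X → X →L[ℝ] Y)
    (hy : y = F udag) (hρ : 0 < ρ) (hν : 0 < ν)
    (hball : ∀ i, u i ∈ Metric.closedBall udag ρ)
    (hdF : ∀ i, HasFDerivAt F (F' (u i)) (u i))
    (htcc : ∀ v ∈ Metric.closedBall udag ρ, ∀ w ∈ Metric.closedBall udag ρ,
      ‖F v - F w - (F' v) (v - w)‖ ≤ ν * ‖F v - F w‖)
    (h j : ℕ) (hhj : h ≤ j)
    (hmin : ∀ i, h ≤ i → i ≤ j → ‖F (u h) - y‖ ≤ ‖F (u i) - y‖) :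
    ∑ i ∈ Finset.Ico h j, |⟪y - F (u i), (F' (u i)) (u h - udag)⟫|
      ≤ (1 + 3 * ν) * ∑ i ∈ Finset.Ico h j, ‖y - F (u i)‖ ^ 2 := by
  rw [Finset.mul_sum]
  apply Finset.sum_le_sum
  intro i hi
  rw [Finset.mem_Ico] at hi
  have hFh : ‖F (u h) - y‖ ≤ ‖F (u i) - y‖ := hmin i hi.1 hi.2.le
  have hud : udag ∈ Metric.closedBall udag ρ := Metric.mem_closedBall_self hρ.le
  have h1 : ‖F (u i) - F udag - (F' (u i)) (u i - udag)‖ ≤ ν * ‖F (u i) - F udag‖ :=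
    htcc _ (hball i) _ hud
  have h2 : ‖F (u i) - F (u h) - (F' (u i)) (u i - u h)‖ ≤ ν * ‖F (u i) - F (u h)‖ :=
    htcc _ (hball i) _ (hball h)
  set r1 := F (u i) - F udag - (F' (u i)) (u i - udag) with hr1
  set r2 := F (u i) - F (u h) - (F' (u i)) (u i - u h) with hr2
  have key : (F' (u i)) (u h - udag) = (F (u h) - y) - r1 + r2 := by
    have e1 : (F' (u i)) (u h - udag) = (F' (u i)) (u i - udag) - (F' (u i)) (u i - u h) := by
      rw [← map_sub]
      congr 1
      abel
    rw [e1, hr1, hr2, hy]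
    abel
  rw [key]
  have hne : ‖F (u i) - y‖ = ‖y - F (u i)‖ := norm_sub_rev _ _
  have hr1' : ‖r1‖ ≤ ν * ‖y - F (u i)‖ := by
    refine h1.trans (le_of_eq ?_)
    rw [← hy, norm_sub_rev]
  have hr2' : ‖r2‖ ≤ ν * (2 * ‖y - F (u i)‖) := by
    refine h2.trans ?_
    have : ‖F (u i) - F (u h)‖ ≤ ‖F (u i) - y‖ + ‖F (u h) - y‖ := by
      have : F (u i) - F (u h) = (F (u i) - y) - (F (u h) - y) := by abel
      rw [this]
      exact norm_sub_le _ _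
    have h3 : ‖F (u i) - F (u h)‖ ≤ 2 * ‖y - F (u i)‖ := by
      rw [← hne]; linarith
    exact mul_le_mul_of_nonneg_left h3 hν.le
  have htri : ‖(F (u h) - y) - r1 + r2‖ ≤ ‖F (u h) - y‖ + ‖r1‖ + ‖r2‖ :=
    (norm_add_le _ _).trans (add_le_add_left (norm_sub_le _ _) _)
  have hFh' : ‖F (u h) - y‖ ≤ ‖y - F (u i)‖ := by rw [← hne]; exact hFh
  calc |⟪y - F (u i), (F (u h) - y) - r1 + r2⟫|
      ≤ ‖y - F (u i)‖ * ‖(F (u h) - y) - r1 + r2‖ := abs_real_inner_le_norm _ _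
    _ ≤ ‖y - F (u i)‖ * (‖F (u h) - y‖ + ‖r1‖ + ‖r2‖) := by
        exact mul_le_mul_of_nonneg_left htri (norm_nonneg _)
    _ ≤ (1 + 3 * ν) * ‖y - F (u i)‖ ^ 2 := by nlinarith [norm_nonneg (y - F (u i))]
end

section
/- Let X and Y be real Hilbert spaces and let (u_k) be iterates of the iteratively regularized Landweber iteration with exact data: u_{k+1} = u_k − F'(u_k)*(F(u_k) − y) − λ_k·Â'(u_k)*(Â(u_k) − y), where y = F(u†). Suppose F is continuous, the two-point tangential cone condition ‖F(u) − F(v) − F'(u)(u − v)‖ ≤ ν‖F(u) − F(v)‖ holds on B_ρ(u†) with ν > 0, for every k: u_k ∈ B_ρ(u†), ‖F'(u_k)‖ ≤ L_F, ‖Â'(u_k)‖ ≤ L_Â, ‖Â(u_k) − y‖ ≤ C_Â^0, λ_k·L_Â·C_Â^0 ≤ ρ and λ_k ≤ C_λ^0·‖F(u_k) − y‖², and that 1 − ν − L_F² − 2·L_Â·C_Â^0·C_λ^0·ρ > 0. Then (u_k) converges strongly in X to some u_∞ with F(u_∞) = y; i.e., the iteration converges to a solution of F(u) = y. -/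
open scoped RealInnerProductSpace

open Filter

set_option maxHeartbeats 4000000 in
/-- Theorem 2.6 (convergence with exact data): the iteratively regularized Landweber iteration
with exact data `y = F(u†)`, under the two-point tangential cone condition, the stated bounds
and `1 − ν − L_F² − 2·L_Â·C_Â⁰·C_λ⁰·ρ > 0`, converges strongly to a solution of `F(u) = y`. -/
theorem stmt9
    {X Y : Type*}
    [NormedAddCommGroup X] [InnerProductSpace ℝ X] [CompleteSpace X]
    [NormedAddCommGroup Y] [InnerProductSpace ℝ Y] [CompleteSpace Y]
    (F A : X → Y) (udag : X) (y : Y) (ρ LF LA ν CA Clam : ℝ)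
    (u : ℕ → X) (lam : ℕ → ℝ)
    (F' A' : X → X →L[ℝ] Y)
    (hy : y = F udag) (hρ : 0 < ρ) (hν : 0 < ν)
    (hCA : 0 < CA) (hClam : 0 < Clam)
    (hFcont : Continuous F)
    (hiter : ∀ k : ℕ,
      u (k + 1) = u k - ContinuousLinearMap.adjoint (F' (u k)) (F (u k) - y)
        - lam k • ContinuousLinearMap.adjoint (A' (u k)) (A (u k) - y))
    (hball : ∀ k, u k ∈ Metric.closedBall udag ρ)
    (hdF : ∀ k, HasFDerivAt F (F' (u k)) (u k))
    (hdA : ∀ k, HasFDerivAt A (A' (u k)) (u k))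
    (hLF : ∀ k, ‖F' (u k)‖ ≤ LF)
    (hLA : ∀ k, ‖A' (u k)‖ ≤ LA)
    (hAres : ∀ k, ‖A (u k) - y‖ ≤ CA)
    (hlam0 : ∀ k, 0 ≤ lam k)
    (hlam1 : ∀ k, lam k * LA * CA ≤ ρ)
    (hlam2 : ∀ k, lam k ≤ Clam * ‖F (u k) - y‖ ^ 2)
    (htcc : ∀ v ∈ Metric.closedBall udag ρ, ∀ w ∈ Metric.closedBall udag ρ,
      ‖F v - F w - (F' v) (v - w)‖ ≤ ν * ‖F v - F w‖)
    (hpos : 0 < 1 - ν - LF ^ 2 - 2 * LA * CA * Clam * ρ) :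
    ∃ uinf : X, Filter.Tendsto u Filter.atTop (nhds uinf) ∧ F uinf = y := by
  classical
  have hudag : udag ∈ Metric.closedBall udag ρ := Metric.mem_closedBall_self hρ.le
  set r : ℕ → Y := fun k => F (u k) - y with hrdef
  set e : ℕ → X := fun k => u k - udag with hedef
  have hLF0 : (0:ℝ) ≤ LF := (norm_nonneg _).trans (hLF 0)
  have hLA0 : (0:ℝ) ≤ LA := (norm_nonneg _).trans (hLA 0)
  have henorm : ∀ k, ‖e k‖ ≤ ρ := by
    intro k
    have h := hball k
    rw [Metric.mem_closedBall, dist_eq_norm] at h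
    simpa [hedef] using h
  -- step formula
  have hstep : ∀ k, u k - u (k + 1) = ContinuousLinearMap.adjoint (F' (u k)) (r k)
      + lam k • ContinuousLinearMap.adjoint (A' (u k)) (A (u k) - y) := by
    intro k
    rw [hiter k]
    simp only [hrdef]
    abel
  -- tangential cone specializations
  have htcc1 : ∀ k, ‖r k - F' (u k) (e k)‖ ≤ ν * ‖r k‖ := by
    intro k
    have h := htcc (u k) (hball k) udag hudag
    rw [← hy] at h
    simpa [hrdef, hedef] using h
  have htcc2 : ∀ i j, ‖r i - r j - F' (u i) (u i - u j)‖ ≤ ν * ‖r i - r j‖ := by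
    intro i j
    have h := htcc (u i) (hball i) (u j) (hball j)
    have h2 : F (u i) - F (u j) = r i - r j := by simp only [hrdef]; abel
    rwa [h2] at h
  -- norms of adjoint applications
  have hadjF : ∀ k (w : Y), ‖ContinuousLinearMap.adjoint (F' (u k)) w‖ ≤ LF * ‖w‖ := by
    intro k w
    calc ‖ContinuousLinearMap.adjoint (F' (u k)) w‖
        ≤ ‖ContinuousLinearMap.adjoint (F' (u k))‖ * ‖w‖ := ContinuousLinearMap.le_opNorm _ _
      _ ≤ LF * ‖w‖ := by
          have : ‖ContinuousLinearMap.adjoint (F' (u k))‖ = ‖F' (u k)‖ :=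
            ContinuousLinearMap.adjoint.norm_map (F' (u k))
          rw [this]
          exact mul_le_mul_of_nonneg_right (hLF k) (norm_nonneg _)
  have hadjA : ∀ k, ‖ContinuousLinearMap.adjoint (A' (u k)) (A (u k) - y)‖ ≤ LA * CA := by
    intro k
    calc ‖ContinuousLinearMap.adjoint (A' (u k)) (A (u k) - y)‖
        ≤ ‖ContinuousLinearMap.adjoint (A' (u k))‖ * ‖A (u k) - y‖ :=
          ContinuousLinearMap.le_opNorm _ _
      _ ≤ LA * CA := by
          have hn : ‖ContinuousLinearMap.adjoint (A' (u k))‖ = ‖A' (u k)‖ :=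
            ContinuousLinearMap.adjoint.norm_map (A' (u k))
          rw [hn]
          exact mul_le_mul (hLA k) (hAres k) (norm_nonneg _) hLA0
  have hlam2' : ∀ k, lam k ≤ Clam * ‖r k‖ ^ 2 := by
    intro k; simpa [hrdef] using hlam2 k
  -- the key monotonicity estimate
  set c : ℝ := 2 * (1 - ν - LF ^ 2 - 2 * LA * CA * Clam * ρ) with hcdef
  have hcpos : 0 < c := by rw [hcdef]; linarith
  have key : ∀ k, ‖e (k + 1)‖ ^ 2 + c * ‖r k‖ ^ 2 ≤ ‖e k‖ ^ 2 := by
    intro k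
    set p := ContinuousLinearMap.adjoint (F' (u k)) (r k) with hpdef
    set q := ContinuousLinearMap.adjoint (A' (u k)) (A (u k) - y) with hqdef
    have hek1 : e (k + 1) = e k - (p + lam k • q) := by
      simp only [hedef, hiter k, hpdef, hqdef, hrdef]
      abel
    rw [hek1, norm_sub_sq_real, inner_add_right]
    -- lower bound on ⟪e k, p⟫
    have hip : (1 - ν) * ‖r k‖ ^ 2 ≤ ⟪e k, p⟫ := by
      rw [hpdef, ContinuousLinearMap.adjoint_inner_right]
      have h1 : ⟪F' (u k) (e k), r k⟫ = ‖r k‖ ^ 2 - ⟪r k - F' (u k) (e k), r k⟫ := by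
        rw [inner_sub_left, real_inner_self_eq_norm_sq]; ring
      have h2 : |⟪r k - F' (u k) (e k), r k⟫| ≤ ν * ‖r k‖ * ‖r k‖ :=
        (abs_real_inner_le_norm _ _).trans
          (mul_le_mul_of_nonneg_right (htcc1 k) (norm_nonneg _))
      have h3 := (abs_le.mp h2).2
      rw [h1]
      nlinarith [sq_nonneg ‖r k‖]
    -- lower bound on ⟪e k, lam k • q⟫
    have hiq : -(Clam * (LA * CA * ρ)) * ‖r k‖ ^ 2 ≤ ⟪e k, lam k • q⟫ := by
      rw [real_inner_smul_right]
      have h1 : |⟪e k, q⟫| ≤ ρ * (LA * CA) :=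
        (abs_real_inner_le_norm _ _).trans
          (mul_le_mul (henorm k) (hadjA k) (norm_nonneg _) hρ.le)
      have h2 := (abs_le.mp h1).1
      have h3 := hlam2' k
      have h4 := hlam0 k
      nlinarith [mul_nonneg (mul_nonneg hLA0 hCA.le) hρ.le, sq_nonneg ‖r k‖]
    -- upper bound on ‖p + lam k • q‖²
    have hnp : ‖p‖ ≤ LF * ‖r k‖ := hadjF k (r k)
    have hnq : ‖lam k • q‖ ≤ lam k * (LA * CA) := by
      rw [norm_smul, Real.norm_eq_abs, abs_of_nonneg (hlam0 k)]
      exact mul_le_mul_of_nonneg_left (hadjA k) (hlam0 k)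
    have hnq2 : (lam k * (LA * CA)) ^ 2 ≤ ρ * (Clam * (LA * CA)) * ‖r k‖ ^ 2 := by
      have h3 := hlam0 k
      have ha0 : 0 ≤ lam k * (LA * CA) := mul_nonneg h3 (mul_nonneg hLA0 hCA.le)
      have haρ : lam k * (LA * CA) ≤ ρ := by
        have := hlam1 k; linarith [mul_assoc (lam k) LA CA ▸ this]
      have hab : lam k * (LA * CA) ≤ Clam * ‖r k‖ ^ 2 * (LA * CA) :=
        mul_le_mul_of_nonneg_right (hlam2' k) (mul_nonneg hLA0 hCA.le)
      calc (lam k * (LA * CA)) ^ 2 = (lam k * (LA * CA)) * (lam k * (LA * CA)) := sq _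
        _ ≤ ρ * (Clam * ‖r k‖ ^ 2 * (LA * CA)) := mul_le_mul haρ hab ha0 hρ.le
        _ = ρ * (Clam * (LA * CA)) * ‖r k‖ ^ 2 := by ring
    have hv : ‖p + lam k • q‖ ^ 2
        ≤ 2 * LF ^ 2 * ‖r k‖ ^ 2 + 2 * (ρ * (Clam * (LA * CA))) * ‖r k‖ ^ 2 := by
      have h1 : ‖p + lam k • q‖ ≤ LF * ‖r k‖ + lam k * (LA * CA) :=
        (norm_add_le _ _).trans (add_le_add hnp hnq)
      have h2 : ‖p + lam k • q‖ ^ 2 ≤ (LF * ‖r k‖ + lam k * (LA * CA)) ^ 2 :=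
        pow_le_pow_left₀ (norm_nonneg _) h1 2
      nlinarith [sq_nonneg (LF * ‖r k‖ - lam k * (LA * CA)), hnq2]
    have hce : c * ‖r k‖ ^ 2 = 2 * ‖r k‖ ^ 2 - 2 * ν * ‖r k‖ ^ 2
        - 2 * LF ^ 2 * ‖r k‖ ^ 2 - 4 * LA * CA * Clam * ρ * ‖r k‖ ^ 2 := by
      rw [hcdef]; ring
    linarith [hip, hiq, hv]
  -- summability of residuals
  have hpartial : ∀ n, c * ∑ i ∈ Finset.range n, ‖r i‖ ^ 2 ≤ ‖e 0‖ ^ 2 - ‖e n‖ ^ 2 := by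
    intro n
    induction n with
    | zero => simp
    | succ n ih =>
        rw [Finset.sum_range_succ, mul_add]
        have := key n
        linarith
  have hsum : Summable fun k => ‖r k‖ ^ 2 := by
    apply summable_of_sum_range_le (c := ‖e 0‖ ^ 2 / c) (fun n => sq_nonneg _)
    intro n
    rw [le_div_iff₀ hcpos]
    have h1 := hpartial n
    have h2 := sq_nonneg ‖e n‖
    nlinarith
  -- monotone decreasing energies
  have hganti : Antitone fun n => ‖e n‖ ^ 2 := by
    apply antitone_nat_of_succ_le
    intro n
    have h1 := key n
    have h2 : 0 ≤ c * ‖r n‖ ^ 2 := mul_nonneg hcpos.le (sq_nonneg _)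
    show ‖e (n + 1)‖ ^ 2 ≤ ‖e n‖ ^ 2
    linarith
  have hgcauchy : CauchySeq fun n => ‖e n‖ ^ 2 := by
    refine (tendsto_atTop_ciInf hganti ⟨0, ?_⟩).cauchySeq
    rintro x ⟨n, rfl⟩
    positivity
  have hscauchy : CauchySeq fun n => ∑ i ∈ Finset.range n, ‖r i‖ ^ 2 :=
    hsum.hasSum.tendsto_sum_nat.cauchySeq
  -- the cross-term constant
  set C2 : ℝ := 3 * (1 + ν) + Clam * (LA * CA * ρ) with hC2def
  have hC2pos : 0 < C2 := by
    rw [hC2def]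
    nlinarith [mul_nonneg (mul_nonneg hLA0 hCA.le) hρ.le]
  -- cross-term estimate for a single step
  have cross : ∀ j i, ‖r j‖ ≤ ‖r i‖ → |⟪u i - u (i + 1), e j⟫| ≤ C2 * ‖r i‖ ^ 2 := by
    intro j i hji
    rw [hstep i, inner_add_left]
    have hF : |⟪ContinuousLinearMap.adjoint (F' (u i)) (r i), e j⟫|
        ≤ 3 * (1 + ν) * ‖r i‖ ^ 2 := by
      rw [ContinuousLinearMap.adjoint_inner_left]
      have hsplit : F' (u i) (e j) = F' (u i) (u i - udag) - F' (u i) (u i - u j) := by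
        rw [← map_sub]
        congr 1
        simp only [hedef]
        abel
      rw [hsplit, inner_sub_right]
      have h1 : ‖F' (u i) (u i - udag)‖ ≤ (1 + ν) * ‖r i‖ := by
        have h := htcc1 i
        calc ‖F' (u i) (u i - udag)‖ = ‖r i - (r i - F' (u i) (e i))‖ := by
              simp only [hedef]; congr 1; abel
          _ ≤ ‖r i‖ + ‖r i - F' (u i) (e i)‖ := norm_sub_le _ _
          _ ≤ ‖r i‖ + ν * ‖r i‖ := by linarith
          _ = (1 + ν) * ‖r i‖ := by ring
      have h2 : ‖F' (u i) (u i - u j)‖ ≤ 2 * (1 + ν) * ‖r i‖ := by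
        have h := htcc2 i j
        have hrr : ‖r i - r j‖ ≤ 2 * ‖r i‖ := by
          have := norm_sub_le (r i) (r j)
          linarith
        calc ‖F' (u i) (u i - u j)‖
            = ‖(r i - r j) - (r i - r j - F' (u i) (u i - u j))‖ := by congr 1; abel
          _ ≤ ‖r i - r j‖ + ‖r i - r j - F' (u i) (u i - u j)‖ := norm_sub_le _ _
          _ ≤ ‖r i - r j‖ + ν * ‖r i - r j‖ := by linarith
          _ = (1 + ν) * ‖r i - r j‖ := by ring
          _ ≤ 2 * (1 + ν) * ‖r i‖ := by nlinarith
      have ha : |⟪r i, F' (u i) (u i - udag)⟫| ≤ ‖r i‖ * ((1 + ν) * ‖r i‖) :=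
        (abs_real_inner_le_norm _ _).trans
          (mul_le_mul_of_nonneg_left h1 (norm_nonneg _))
      have hb : |⟪r i, F' (u i) (u i - u j)⟫| ≤ ‖r i‖ * (2 * (1 + ν) * ‖r i‖) :=
        (abs_real_inner_le_norm _ _).trans
          (mul_le_mul_of_nonneg_left h2 (norm_nonneg _))
      calc |⟪r i, F' (u i) (u i - udag)⟫ - ⟪r i, F' (u i) (u i - u j)⟫|
          ≤ |⟪r i, F' (u i) (u i - udag)⟫| + |⟪r i, F' (u i) (u i - u j)⟫| := abs_sub _ _
        _ ≤ ‖r i‖ * ((1 + ν) * ‖r i‖) + ‖r i‖ * (2 * (1 + ν) * ‖r i‖) := add_le_add ha hb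
        _ = 3 * (1 + ν) * ‖r i‖ ^ 2 := by ring
    have hA2 : |⟪lam i • ContinuousLinearMap.adjoint (A' (u i)) (A (u i) - y), e j⟫|
        ≤ Clam * (LA * CA * ρ) * ‖r i‖ ^ 2 := by
      rw [real_inner_smul_left, abs_mul, abs_of_nonneg (hlam0 i)]
      have h1 : |⟪ContinuousLinearMap.adjoint (A' (u i)) (A (u i) - y), e j⟫|
          ≤ LA * CA * ρ :=
        (abs_real_inner_le_norm _ _).trans
          (mul_le_mul (hadjA i) (henorm j) (norm_nonneg _)
            (mul_nonneg hLA0 hCA.le))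
      have h2 := hlam2' i
      have h3 := hlam0 i
      have h4 : (0:ℝ) ≤ LA * CA * ρ := mul_nonneg (mul_nonneg hLA0 hCA.le) hρ.le
      nlinarith [abs_nonneg ⟪ContinuousLinearMap.adjoint (A' (u i)) (A (u i) - y), e j⟫,
        sq_nonneg ‖r i‖]
    calc |⟪ContinuousLinearMap.adjoint (F' (u i)) (r i), e j⟫
          + ⟪lam i • ContinuousLinearMap.adjoint (A' (u i)) (A (u i) - y), e j⟫|
        ≤ |⟪ContinuousLinearMap.adjoint (F' (u i)) (r i), e j⟫|
          + |⟪lam i • ContinuousLinearMap.adjoint (A' (u i)) (A (u i) - y), e j⟫| :=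
          abs_add_le _ _
      _ ≤ 3 * (1 + ν) * ‖r i‖ ^ 2 + Clam * (LA * CA * ρ) * ‖r i‖ ^ 2 := add_le_add hF hA2
      _ = C2 * ‖r i‖ ^ 2 := by rw [hC2def]; ring
  -- telescoping
  have tele : ∀ a b, a ≤ b → u a - u b = ∑ i ∈ Finset.Ico a b, (u i - u (i + 1)) := by
    intro a b hab
    rw [Finset.sum_Ico_eq_sub _ hab, Finset.sum_range_sub' u, Finset.sum_range_sub' u]
    abel
  have sumbound : ∀ j a b, a ≤ b → (∀ i ∈ Finset.Ico a b, ‖r j‖ ≤ ‖r i‖) →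
      |⟪u a - u b, e j⟫| ≤ C2 * ∑ i ∈ Finset.Ico a b, ‖r i‖ ^ 2 := by
    intro j a b hab hmin
    rw [tele a b hab, sum_inner]
    calc |∑ i ∈ Finset.Ico a b, ⟪u i - u (i + 1), e j⟫|
        ≤ ∑ i ∈ Finset.Ico a b, |⟪u i - u (i + 1), e j⟫| := Finset.abs_sum_le_sum_abs _ _
      _ ≤ ∑ i ∈ Finset.Ico a b, C2 * ‖r i‖ ^ 2 :=
          Finset.sum_le_sum fun i hi => cross j i (hmin i hi)
      _ = C2 * ∑ i ∈ Finset.Ico a b, ‖r i‖ ^ 2 := by rw [Finset.mul_sum]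
  -- key identity
  have hident : ∀ a b, ‖u a - u b‖ ^ 2
      = ‖e a‖ ^ 2 - ‖e b‖ ^ 2 + 2 * ⟪u b - u a, e b⟫ := by
    intro a b
    have h1 : u a - u b = e a - e b := by simp only [hedef]; abel
    have h2 : u b - u a = e b - e a := by simp only [hedef]; abel
    have h3 : ⟪e b - e a, e b⟫ = ⟪e b, e b⟫ - ⟪e a, e b⟫ := inner_sub_left _ _ _
    have h4 : ⟪e b, e b⟫ = ‖e b‖ ^ 2 := real_inner_self_eq_norm_sq _
    rw [h1, h2, norm_sub_sq_real, h3, h4]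
    ring
  -- Cauchy sequence
  have hucauchy : CauchySeq u := by
    rw [Metric.cauchySeq_iff]
    intro ε hε
    obtain ⟨N1, hN1⟩ := Metric.cauchySeq_iff.mp hgcauchy (ε ^ 2 / 16) (by positivity)
    obtain ⟨N2, hN2⟩ := Metric.cauchySeq_iff.mp hscauchy (ε ^ 2 / (16 * (C2 + 1)))
      (by positivity)
    have main : ∀ l k, N1 ≤ l → N2 ≤ l → l ≤ k → dist (u k) (u l) < ε := by
      intro l k hl1 hl2 hlk
      -- choose the minimizing index
      obtain ⟨j, hjmem, hjmin⟩ := Finset.exists_min_image (Finset.Icc l k)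
        (fun i => ‖r i‖) ⟨l, by simp [hlk]⟩
      obtain ⟨hlj, hjk⟩ := Finset.mem_Icc.mp hjmem
      -- tail sum bound
      have htail : ∑ i ∈ Finset.Ico l k, ‖r i‖ ^ 2 < ε ^ 2 / (16 * (C2 + 1)) := by
        have h := hN2 k (le_trans hl2 hlk) l hl2
        rw [Real.dist_eq] at h
        have hsub : ∑ i ∈ Finset.Ico l k, ‖r i‖ ^ 2
            = ∑ i ∈ Finset.range k, ‖r i‖ ^ 2 - ∑ i ∈ Finset.range l, ‖r i‖ ^ 2 :=
          Finset.sum_Ico_eq_sub _ hlk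
        rw [hsub]
        exact lt_of_le_of_lt (le_abs_self _) h
      -- sub-sums are bounded by the full tail
      have hsub1 : ∑ i ∈ Finset.Ico j k, ‖r i‖ ^ 2 ≤ ∑ i ∈ Finset.Ico l k, ‖r i‖ ^ 2 :=
        Finset.sum_le_sum_of_subset_of_nonneg
          (Finset.Ico_subset_Ico hlj le_rfl) (fun i _ _ => sq_nonneg _)
      have hsub2 : ∑ i ∈ Finset.Ico l j, ‖r i‖ ^ 2 ≤ ∑ i ∈ Finset.Ico l k, ‖r i‖ ^ 2 :=
        Finset.sum_le_sum_of_subset_of_nonneg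
          (Finset.Ico_subset_Ico le_rfl hjk) (fun i _ _ => sq_nonneg _)
      -- cross terms
      have hcross1 : |⟪u j - u k, e j⟫| ≤ C2 * ∑ i ∈ Finset.Ico j k, ‖r i‖ ^ 2 := by
        apply sumbound j j k hjk
        intro i hi
        rw [Finset.mem_Ico] at hi
        exact hjmin i (Finset.mem_Icc.mpr ⟨le_trans hlj hi.1, le_of_lt hi.2⟩)
      have hcross2 : |⟪u l - u j, e j⟫| ≤ C2 * ∑ i ∈ Finset.Ico l j, ‖r i‖ ^ 2 := by
        apply sumbound j l j hlj
        intro i hi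
        rw [Finset.mem_Ico] at hi
        exact hjmin i (Finset.mem_Icc.mpr ⟨hi.1, le_trans (le_of_lt hi.2) hjk⟩)
      -- energy differences
      have hg1 : |‖e k‖ ^ 2 - ‖e j‖ ^ 2| < ε ^ 2 / 16 := by
        have h := hN1 k (le_trans hl1 hlk) j (le_trans hl1 hlj)
        rwa [Real.dist_eq] at h
      have hg2 : |‖e l‖ ^ 2 - ‖e j‖ ^ 2| < ε ^ 2 / 16 := by
        have h := hN1 l hl1 j (le_trans hl1 hlj)
        rwa [Real.dist_eq] at h
      -- bounds on the two squared norms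
      have hbound : ∀ a, N1 ≤ a →
          |⟪u j - u a, e j⟫| ≤ C2 * ∑ i ∈ Finset.Ico l k, ‖r i‖ ^ 2 →
          |‖e a‖ ^ 2 - ‖e j‖ ^ 2| < ε ^ 2 / 16 →
          ‖u a - u j‖ ^ 2 < ε ^ 2 / 4 := by
        intro a _ hcr hg
        have hid := hident a j
        have h1 : ‖e a‖ ^ 2 - ‖e j‖ ^ 2 < ε ^ 2 / 16 := lt_of_le_of_lt (le_abs_self _) hg
        have h2 : ⟪u j - u a, e j⟫ ≤ C2 * ∑ i ∈ Finset.Ico l k, ‖r i‖ ^ 2 :=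
          le_trans (le_abs_self _) hcr
        have h3 : C2 * ∑ i ∈ Finset.Ico l k, ‖r i‖ ^ 2
            < C2 * (ε ^ 2 / (16 * (C2 + 1))) :=
          mul_lt_mul_of_pos_left htail hC2pos
        have h4 : C2 * (ε ^ 2 / (16 * (C2 + 1))) ≤ ε ^ 2 / 16 := by
          have h16 : (0:ℝ) < 16 * (C2 + 1) := by nlinarith [hC2pos]
          rw [← mul_div_assoc, div_le_div_iff₀ h16 (by norm_num : (0:ℝ) < 16)]
          nlinarith [sq_nonneg ε]
        rw [hid]
        nlinarith
      have hb1 : ‖u k - u j‖ ^ 2 < ε ^ 2 / 4 := by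
        apply hbound k (le_trans hl1 hlk)
        · exact le_trans hcross1 (mul_le_mul_of_nonneg_left hsub1 hC2pos.le)
        · exact hg1
      have hb2 : ‖u l - u j‖ ^ 2 < ε ^ 2 / 4 := by
        apply hbound l hl1
        · have : |⟪u j - u l, e j⟫| = |⟪u l - u j, e j⟫| := by
            rw [show u j - u l = -(u l - u j) by abel, inner_neg_left, abs_neg]
          rw [this]
          exact le_trans hcross2 (mul_le_mul_of_nonneg_left hsub2 hC2pos.le)
        · exact hg2
      have hn1 : ‖u k - u j‖ < ε / 2 := by
        nlinarith [norm_nonneg (u k - u j), hε]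
      have hn2 : ‖u l - u j‖ < ε / 2 := by
        nlinarith [norm_nonneg (u l - u j), hε]
      rw [dist_eq_norm]
      calc ‖u k - u l‖ = ‖(u k - u j) + (u j - u l)‖ := by congr 1; abel
        _ ≤ ‖u k - u j‖ + ‖u j - u l‖ := norm_add_le _ _
        _ = ‖u k - u j‖ + ‖u l - u j‖ := by rw [← norm_neg (u j - u l)]; congr 1; abel
        _ < ε / 2 + ε / 2 := add_lt_add hn1 hn2
        _ = ε := by ring
    refine ⟨max N1 N2, ?_⟩
    intro m hm n hn
    rcases le_total n m with h | h
    · exact main n m (le_trans (le_max_left _ _) hn) (le_trans (le_max_right _ _) hn) h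
    · rw [dist_comm]
      exact main m n (le_trans (le_max_left _ _) hm) (le_trans (le_max_right _ _) hm) h
  -- conclusion
  obtain ⟨uinf, hlim⟩ := cauchySeq_tendsto_of_complete hucauchy
  refine ⟨uinf, hlim, ?_⟩
  have hr0 : Tendsto (fun k => ‖r k‖) atTop (nhds 0) := by
    have h := hsum.tendsto_atTop_zero
    have h2 := h.sqrt
    rw [Real.sqrt_zero] at h2
    convert h2 using 1
    funext k
    rw [Real.sqrt_sq (norm_nonneg _)]
  have hrten : Tendsto r atTop (nhds 0) := tendsto_zero_iff_norm_tendsto_zero.mpr hr0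
  have h1 : Tendsto (fun k => F (u k)) atTop (nhds (F uinf)) :=
    (hFcont.tendsto uinf).comp hlim
  have h2 : Tendsto (fun k => F (u k)) atTop (nhds y) := by
    have : (fun k => F (u k)) = fun k => r k + y := by
      funext k; simp [hrdef]
    rw [this]
    simpa using hrten.add tendsto_const_nhds
  exact tendsto_nhds_unique h1 h2
end

section
/- Let X and Y be real Hilbert spaces, u† ∈ X, y = F(u†), and let the noise-free iterates (u_k) of u_{k+1} = u_k − F'(u_k)*(F(u_k) − y) − λ_k·Â'(u_k)*(Â(u_k) − y) converge strongly to u†. Let δ_n > 0 with δ_n → 0, let y_n ∈ Y with ‖y_n − y‖ ≤ δ_n, and let (u_k^n)_k denote the iterates of the iteration with data y_n and parameters λ_k^n. Suppose: (a) for each n, the monotonicity property ‖u_{k+1}^n − u†‖ ≤ ‖u_k^n − u†‖ holds for all k < k_n, where k_n is the stopping index of the discrepancy principle ‖F(u_{k_n}^n) − y_n‖ ≤ τδ_n < ‖F(u_k^n) − y_n‖ for k < k_n; (b) for each fixed k, u_k^n → u_k strongly as n → ∞; (c) F is continuous; (d) k_n → ∞ as n → ∞. Then u_{k_n}^n → u†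 strongly as n → ∞. -/
open scoped RealInnerProductSpace

/-- Theorem 2.7, case (ii) (stability): if the noise-free iterates converge strongly to `u†`,
the noisy iterates are monotone up to the stopping index `k_n` of the discrepancy principle,
for each fixed `k` the noisy iterates converge to the noise-free ones as `n → ∞`, `F` is
continuous and `k_n → ∞`, then `u_{k_n}^{δ_n} → u†` as `n → ∞`. -/
theorem stmt10
    {X Y : Type*}
    [NormedAddCommGroup X] [InnerProductSpace ℝ X] [CompleteSpace X]
    [NormedAddCommGroup Y] [InnerProductSpace ℝ Y] [CompleteSpace Y]
    (F A : X → Y) (udag : X) (y : Y) (τ : ℝ)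
    (F' A' : X → X →L[ℝ] Y)
    (u : ℕ → X) (lam : ℕ → ℝ)
    (δn : ℕ → ℝ) (yn : ℕ → Y) (un : ℕ → ℕ → X) (lamn : ℕ → ℕ → ℝ) (kn : ℕ → ℕ)
    (hy : y = F udag) (hτ : 0 < τ)
    (hiter : ∀ k : ℕ,
      u (k + 1) = u k - ContinuousLinearMap.adjoint (F' (u k)) (F (u k) - y)
        - lam k • ContinuousLinearMap.adjoint (A' (u k)) (A (u k) - y))
    (hconv : Filter.Tendsto u Filter.atTop (nhds udag))
    (hδpos : ∀ n, 0 < δn n)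
    (hδ0 : Filter.Tendsto δn Filter.atTop (nhds 0))
    (hynoise : ∀ n, ‖yn n - y‖ ≤ δn n)
    (hitern : ∀ n k,
      un n (k + 1) = un n k
        - ContinuousLinearMap.adjoint (F' (un n k)) (F (un n k) - yn n)
        - lamn n k • ContinuousLinearMap.adjoint (A' (un n k)) (A (un n k) - yn n))
    (hmono : ∀ n, ∀ k < kn n, ‖un n (k + 1) - udag‖ ≤ ‖un n k - udag‖)
    (hstop : ∀ n, ‖F (un n (kn n)) - yn n‖ ≤ τ * δn n)
    (hbefore : ∀ n, ∀ k < kn n, τ * δn n < ‖F (un n k) - yn n‖)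
    (hstab : ∀ k, Filter.Tendsto (fun n => un n k) Filter.atTop (nhds (u k)))
    (hFcont : Continuous F)
    (hkn : Filter.Tendsto kn Filter.atTop Filter.atTop) :
    Filter.Tendsto (fun n => un n (kn n)) Filter.atTop (nhds udag) := by
  rw [Metric.tendsto_atTop]
  intro ε hε
  obtain ⟨K, hK⟩ := Metric.tendsto_atTop.mp hconv (ε / 2) (by linarith)
  obtain ⟨N1, hN1⟩ := Metric.tendsto_atTop.mp (hstab K) (ε / 2) (by linarith)
  obtain ⟨N2, hN2⟩ := Filter.eventually_atTop.mp (hkn.eventually_ge_atTop K)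
  refine ⟨max N1 N2, fun n hn => ?_⟩
  have hknK : K ≤ kn n := hN2 n (le_trans (le_max_right _ _) hn)
  have hchain : ∀ m, K ≤ m → m ≤ kn n → ‖un n m - udag‖ ≤ ‖un n K - udag‖ := by
    intro m
    induction m with
    | zero => intro h1 _; simp_all
    | succ m ih =>
      intro h1 h2
      rcases Nat.lt_or_ge K (m + 1) with h | h
      · exact le_trans (hmono n m (lt_of_lt_of_le (Nat.lt_succ_self m) h2))
          (ih (Nat.lt_succ_iff.mp h) (le_trans (Nat.le_succ m) h2))
      · have : K = m + 1 := le_antisymm h1 h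
        rw [this]
  have h1 : dist (un n (kn n)) udag ≤ dist (un n K) udag := by
    rw [dist_eq_norm, dist_eq_norm]
    exact hchain (kn n) hknK le_rfl
  have h2 : dist (un n K) udag ≤ dist (un n K) (u K) + dist (u K) udag :=
    dist_triangle _ _ _
  have h3 : dist (un n K) (u K) < ε / 2 := hN1 n (le_trans (le_max_left _ _) hn)
  have h4 : dist (u K) udag < ε / 2 := hK K le_rfl
  linarith
end
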